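/- arXiv:2407.17736 — 4 statements merged into one kernel-verified Lean document; each statement's English description precedes it below -/
import Mathlib

section
/- Let A(w) denote the symmetric matrix A_{ij}(w) = w·w_{ij} − (1/2)|∇w|²δ_{ij} for a positive C² function w. If u, v are positive C² functions on Ω, then A(u+v) = (u+v)u⁻¹·A(u) + (u+v)v⁻¹·A(v) + (1/2)(v u⁻¹|∇u|² + u v⁻¹|∇v|² − 2∇u·∇v)·Id, and the scalar coefficient of Id is nonnegative. -/
open scoped BigOperators Classical
open MeasureTheory

noncomputable section

abbrev E (n : ℕ) := EuclideanSpace ℝ (Fin n)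

/-- k-th elementary symmetric polynomial of a vector in ℝⁿ. -/
def esymm (n k : ℕ) (lam : Fin n → ℝ) : ℝ :=
  ∑ s ∈ Finset.univ.powersetCard k, ∏ i ∈ s, lam i

/-- Eigenvalue vector of a real symmetric matrix (junk value 0 otherwise). -/
def eigs {n : ℕ} (M : Matrix (Fin n) (Fin n) ℝ) : Fin n → ℝ :=
  if h : M.IsHermitian then h.eigenvalues else 0

/-- σ_k of the eigenvalues of a symmetric matrix. -/
def Sk (n k : ℕ) (M : Matrix (Fin n) (Fin n) ℝ) : ℝ := esymm n k (eigs M)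

/-- The (closed) Gårding cone Γ_k. -/
def GammaK (n k : ℕ) : Set (Fin n → ℝ) :=
  {lam | ∀ i, 1 ≤ i → i ≤ k → 0 ≤ esymm n i lam}

/-- i-th partial derivative. -/
def pd {n : ℕ} (u : E n → ℝ) (i : Fin n) (x : E n) : ℝ :=
  fderiv ℝ u x (EuclideanSpace.single i 1)

/-- Hessian matrix. -/
def hess {n : ℕ} (u : E n → ℝ) (x : E n) : Matrix (Fin n) (Fin n) ℝ :=
  Matrix.of fun i j => pd (fun y => pd u j y) i x

/-- |∇u|². -/
def gradsq {n : ℕ} (u : E n → ℝ) (x : E n) : ℝ := ∑ i, (pd u i x) ^ 2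

/-- The conformal Schouten-type matrix A_{ij}(u) = u u_{ij} - (1/2)|∇u|² δ_{ij}. -/
def Amat {n : ℕ} (u : E n → ℝ) (x : E n) : Matrix (Fin n) (Fin n) ℝ :=
  Matrix.of fun i j => u x * hess u x i j - (1 / 2) * gradsq u x * (if i = j then 1 else 0)

theorem stmt1 (n : ℕ) (Ω : Set (E n)) (hΩ : IsOpen Ω) (u v : E n → ℝ)
    (hu : ContDiffOn ℝ 2 u Ω) (hv : ContDiffOn ℝ 2 v Ω)
    (hupos : ∀ x ∈ Ω, 0 < u x) (hvpos : ∀ x ∈ Ω, 0 < v x) :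
    ∀ x ∈ Ω,
      Amat (fun y => u y + v y) x =
        ((u x + v x) * (u x)⁻¹) • Amat u x + ((u x + v x) * (v x)⁻¹) • Amat v x +
          ((1 / 2) * (v x * (u x)⁻¹ * gradsq u x + u x * (v x)⁻¹ * gradsq v x
              - 2 * ∑ i, pd u i x * pd v i x)) • (1 : Matrix (Fin n) (Fin n) ℝ) ∧
      0 ≤ v x * (u x)⁻¹ * gradsq u x + u x * (v x)⁻¹ * gradsq v x
          - 2 * ∑ i, pd u i x * pd v i x := by
  intro x hx
  have hxΩ : Ω ∈ nhds x := hΩ.mem_nhds hx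
  have hua : u x ≠ 0 := (hupos x hx).ne'
  have hva : v x ≠ 0 := (hvpos x hx).ne'
  -- differentiability facts
  have hud : ∀ y ∈ Ω, DifferentiableAt ℝ u y := fun y hy =>
    (hu.contDiffAt (hΩ.mem_nhds hy)).differentiableAt (by norm_num)
  have hvd : ∀ y ∈ Ω, DifferentiableAt ℝ v y := fun y hy =>
    (hv.contDiffAt (hΩ.mem_nhds hy)).differentiableAt (by norm_num)
  have hpdu : ∀ j, DifferentiableAt ℝ (fun y => pd u j y) x := fun j =>
    (((hu.contDiffAt hxΩ).fderiv_right (m := 1) (by norm_num)).differentiableAt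
      (by norm_num)).clm_apply (differentiableAt_const _)
  have hpdv : ∀ j, DifferentiableAt ℝ (fun y => pd v j y) x := fun j =>
    (((hv.contDiffAt hxΩ).fderiv_right (m := 1) (by norm_num)).differentiableAt
      (by norm_num)).clm_apply (differentiableAt_const _)
  -- first derivative additivity on Ω
  have hsum : ∀ y ∈ Ω, ∀ j, pd (fun z => u z + v z) j y = pd u j y + pd v j y := by
    intro y hy j
    unfold pd
    rw [fderiv_fun_add (hud y hy) (hvd y hy)]
    rfl
  -- Hessian additivity at x
  have hH : ∀ i j, hess (fun y => u y + v y) x i j = hess u x i j + hess v x i j := by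
    intro i j
    have hev : (fun y => pd (fun z => u z + v z) j y) =ᶠ[nhds x]
        (fun y => pd u j y + pd v j y) :=
      Filter.eventuallyEq_of_mem hxΩ (fun y hy => hsum y hy j)
    have e1 : hess (fun y => u y + v y) x i j
        = fderiv ℝ (fun y => pd (fun z => u z + v z) j y) x (EuclideanSpace.single i 1) := rfl
    rw [e1, hev.fderiv_eq, fderiv_fun_add (hpdu j) (hpdv j)]
    rfl
  -- gradient square additivity at x
  have hg : gradsq (fun y => u y + v y) x =
      gradsq u x + gradsq v x + 2 * ∑ i, pd u i x * pd v i x := by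
    simp only [gradsq, hsum x hx, add_sq, Finset.sum_add_distrib, Finset.mul_sum]
    ring_nf
  constructor
  · ext i j
    simp only [Amat, Matrix.add_apply, Matrix.smul_apply, Matrix.one_apply, Matrix.of_apply,
      smul_eq_mul, hH, hg]
    by_cases hij : i = j <;> simp [hij] <;> field_simp <;> ring
  · have key : v x * (u x)⁻¹ * gradsq u x + u x * (v x)⁻¹ * gradsq v x
        - 2 * ∑ i, pd u i x * pd v i x =
        ∑ i, (v x * (u x)⁻¹ * (pd u i x) ^ 2 + u x * (v x)⁻¹ * (pd v i x) ^ 2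
          - 2 * (pd u i x * pd v i x)) := by
      simp only [gradsq, Finset.sum_sub_distrib, Finset.sum_add_distrib, Finset.mul_sum]
    rw [key]
    apply Finset.sum_nonneg
    intro i _
    have h1 : 0 < u x := hupos x hx
    have h2 : 0 < v x := hvpos x hx
    have h3 : 0 ≤ (v x * pd u i x - u x * pd v i x) ^ 2 := sq_nonneg _
    have h4 : 0 < u x * v x := mul_pos h1 h2
    have : v x * (u x)⁻¹ * pd u i x ^ 2 + u x * (v x)⁻¹ * pd v i x ^ 2
        - 2 * (pd u i x * pd v i x) =
        (v x * pd u i x - u x * pd v i x) ^ 2 / (u x * v x) := by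
      field_simp
      ring
    rw [this]
    positivity
end
end

section
/- If the Gårding cone Γ_k = {λ ∈ ℝⁿ : σ_i(λ) ≥ 0 for all 1 ≤ i ≤ k} is convex and u, v are positive C² functions on Ω whose matrices A(u), A(v) (defined by A_{ij}(w) = w w_{ij} − (1/2)|∇w|² δ_{ij}) have eigenvalue vectors in Γ_k at every point, then the eigenvalue vector of A(u+v) also lies in Γ_k at every point. -/
open scoped BigOperators Classical
open MeasureTheory

noncomputable section

/-! ### Auxiliary lemmas: symmetry/cone properties of `GammaK` -/

open scoped RealInnerProductSpace
open Matrix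

lemma esymm_comp_perm (n i : ℕ) (lam : Fin n → ℝ) (σ : Equiv.Perm (Fin n)) :
    esymm n i (lam ∘ σ) = esymm n i lam := by
  have h1 : ∀ f : Fin n → ℝ, esymm n i f = (Finset.univ.val.map f).esymm i := by
    intro f; rw [Finset.esymm_map_val]; rfl
  rw [h1, h1 lam]
  congr 1
  have h2 : (Finset.univ.val.map (lam ∘ σ)) = (Finset.univ.val.map ⇑σ).map lam := by
    rw [Multiset.map_map]
  rw [h2]
  congr 1
  calc Finset.univ.val.map ⇑σ = (Finset.univ.map σ.toEmbedding).val := by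
        rw [Finset.map_val]; rfl
    _ = Finset.univ.val := by rw [Finset.map_univ_equiv]

lemma GammaK_perm {n k : ℕ} {lam : Fin n → ℝ} (h : lam ∈ GammaK n k) (σ : Equiv.Perm (Fin n)) :
    lam ∘ σ ∈ GammaK n k := fun i h1 h2 => (esymm_comp_perm n i lam σ) ▸ h i h1 h2

lemma esymm_smul (n i : ℕ) (t : ℝ) (lam : Fin n → ℝ) :
    esymm n i (fun j => t * lam j) = t ^ i * esymm n i lam := by
  unfold esymm
  rw [Finset.mul_sum]
  refine Finset.sum_congr rfl fun s hs => ?_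
  rw [Finset.prod_mul_distrib, Finset.prod_const,
    (Finset.mem_powersetCard.1 hs).2]

lemma GammaK_smul {n k : ℕ} {t : ℝ} (ht : 0 ≤ t) {lam : Fin n → ℝ} (h : lam ∈ GammaK n k) :
    (fun j => t * lam j) ∈ GammaK n k := by
  intro i h1 h2
  rw [esymm_smul]
  exact mul_nonneg (pow_nonneg ht i) (h i h1 h2)

lemma GammaK_const {n k : ℕ} {c : ℝ} (hc : 0 ≤ c) : (fun _ : Fin n => c) ∈ GammaK n k := by
  intro i _ _
  exact Finset.sum_nonneg fun s _ => Finset.prod_nonneg fun j _ => hc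

lemma GammaK_add {n k : ℕ} (hconv : Convex ℝ (GammaK n k)) {x y : Fin n → ℝ}
    (hx : x ∈ GammaK n k) (hy : y ∈ GammaK n k) : x + y ∈ GammaK n k := by
  have hmid : (1/2 : ℝ) • x + (1/2 : ℝ) • y ∈ GammaK n k :=
    hconv hx hy (by norm_num) (by norm_num) (by norm_num)
  have h2 := GammaK_smul (by norm_num : (0:ℝ) ≤ 2) hmid
  convert h2 using 1
  funext j
  simp [Pi.smul_apply, Pi.add_apply]
  ring

/-! ### Spectral lemmas -/

lemma inner_eq_dot {n : ℕ} (x y : EuclideanSpace ℝ (Fin n)) :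
    ⟪x, y⟫ = dotProduct (WithLp.equiv 2 _ x) (WithLp.equiv 2 _ y) := by
  simp [PiLp.inner_apply, RCLike.inner_apply, conj_trivial, dotProduct]
  exact Finset.sum_congr rfl fun _ _ => mul_comm _ _

lemma dot_mulVec_symm {n : ℕ} {M : Matrix (Fin n) (Fin n) ℝ} (hM : M.IsHermitian)
    (f g : Fin n → ℝ) : dotProduct (M *ᵥ f) g = dotProduct f (M *ᵥ g) := by
  simp only [dotProduct, Matrix.mulVec, dotProduct, Finset.sum_mul,
    Finset.mul_sum]
  rw [Finset.sum_comm]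
  refine Finset.sum_congr rfl fun i _ => Finset.sum_congr rfl fun j _ => ?_
  have h : M j i = M i j := by simpa using (hM.apply j i).symm
  rw [h]; ring

/-- identity map from functions to EuclideanSpace -/
def toE {n : ℕ} (f : Fin n → ℝ) : EuclideanSpace ℝ (Fin n) := (WithLp.equiv 2 _).symm f

lemma rayleigh_eq {n : ℕ} {M : Matrix (Fin n) (Fin n) ℝ} (hM : M.IsHermitian)
    (b : OrthonormalBasis (Fin n) ℝ (EuclideanSpace ℝ (Fin n))) (i : Fin n) :
    dotProduct (M *ᵥ ⇑(b i)) ⇑(b i)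
      = ∑ j, (⟪b i, hM.eigenvectorBasis j⟫ * ⟪hM.eigenvectorBasis j, b i⟫) * hM.eigenvalues j := by
  set u := hM.eigenvectorBasis with hu
  have key : ∀ j : Fin n, ⟪toE (M *ᵥ ⇑(b i)), u j⟫ = hM.eigenvalues j * ⟪b i, u j⟫ := by
    intro j
    have h1 : ⟪toE (M *ᵥ ⇑(b i)), u j⟫ = dotProduct (M *ᵥ ⇑(b i)) ⇑(u j) := by
      rw [inner_eq_dot]; rfl
    rw [h1, dot_mulVec_symm hM, hM.mulVec_eigenvectorBasis]
    rw [inner_eq_dot]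
    simp only [dotProduct, Finset.mul_sum, Pi.smul_apply, smul_eq_mul]
    exact Finset.sum_congr rfl fun l _ => by
      show (b i).ofLp l * (hM.eigenvalues j * (hM.eigenvectorBasis j).ofLp l)
        = hM.eigenvalues j * ((b i).ofLp l * (hM.eigenvectorBasis j).ofLp l)
      ring
  calc dotProduct (M *ᵥ ⇑(b i)) ⇑(b i)
      = ⟪toE (M *ᵥ ⇑(b i)), b i⟫ := by rw [inner_eq_dot]; rfl
    _ = ∑ j, ⟪toE (M *ᵥ ⇑(b i)), u j⟫ * ⟪u j, b i⟫ := (u.sum_inner_mul_inner _ _).symm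
    _ = ∑ j, (⟪b i, u j⟫ * ⟪u j, b i⟫) * hM.eigenvalues j := by
        refine Finset.sum_congr rfl fun j _ => ?_
        rw [key j]; ring

/-- doubly stochastic matrix from two orthonormal bases -/
lemma ds_matrix_mem {n : ℕ} (b u : OrthonormalBasis (Fin n) ℝ (EuclideanSpace ℝ (Fin n))) :
    (Matrix.of fun i j => ⟪b i, u j⟫ * ⟪u j, b i⟫) ∈ doublyStochastic ℝ (Fin n) := by
  rw [mem_doublyStochastic_iff_sum]
  refine ⟨fun i j => ?_, fun i => ?_, fun j => ?_⟩
  · show 0 ≤ ⟪b i, u j⟫ * ⟪u j, b i⟫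
    rw [real_inner_comm (u j) (b i)]
    exact mul_self_nonneg _
  · show (∑ j, ⟪b i, u j⟫ * ⟪u j, b i⟫) = 1
    rw [u.sum_inner_mul_inner]
    exact (orthonormal_iff_ite.1 b.orthonormal i i).trans (by simp)
  · show (∑ i, ⟪b i, u j⟫ * ⟪u j, b i⟫) = 1
    have h : ∀ i, ⟪b i, u j⟫ * ⟪u j, b i⟫ = ⟪u j, b i⟫ * ⟪b i, u j⟫ := fun i => mul_comm _ _
    simp_rw [h]
    rw [b.sum_inner_mul_inner]
    exact (orthonormal_iff_ite.1 u.orthonormal j j).trans (by simp)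

lemma permMatrix_mulVec {n : ℕ} (σ : Equiv.Perm (Fin n)) (lam : Fin n → ℝ) :
    (σ.permMatrix ℝ) *ᵥ lam = lam ∘ σ := by
  funext i
  simp [Matrix.mulVec, dotProduct, Equiv.Perm.permMatrix, PEquiv.toMatrix_apply,
    Equiv.toPEquiv_apply, Option.mem_def, ite_mul, Finset.sum_ite_eq]

/-- D doubly stochastic, lam in GammaK (convex) ⟹ D *ᵥ lam ∈ GammaK -/
lemma ds_mulVec_mem {n k : ℕ} (hconv : Convex ℝ (GammaK n k)) {D : Matrix (Fin n) (Fin n) ℝ}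
    (hD : D ∈ doublyStochastic ℝ (Fin n)) {lam : Fin n → ℝ} (hlam : lam ∈ GammaK n k) :
    D *ᵥ lam ∈ GammaK n k := by
  obtain ⟨w, hw0, hw1, hsum⟩ := exists_eq_sum_perm_of_mem_doublyStochastic hD
  have hD2 : D *ᵥ lam = ∑ σ : Equiv.Perm (Fin n), w σ • (lam ∘ σ) := by
    rw [← hsum]
    funext i
    simp only [Matrix.mulVec, dotProduct, Finset.sum_apply, Matrix.sum_apply,
      Matrix.smul_apply, smul_eq_mul, Finset.sum_mul, Pi.smul_apply]
    rw [Finset.sum_comm]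
    refine Finset.sum_congr rfl fun σ _ => ?_
    have h := congrFun (permMatrix_mulVec σ lam) i
    simp only [Matrix.mulVec, dotProduct, Function.comp_apply] at h
    show _ = w σ * lam (σ i)
    rw [← h, Finset.mul_sum]
    exact Finset.sum_congr rfl fun j _ => by ring
  rw [hD2]
  exact hconv.sum_mem (fun σ _ => hw0 σ) hw1 (fun σ _ => GammaK_perm hlam σ)

lemma rayleigh_mem {n k : ℕ} (hconv : Convex ℝ (GammaK n k)) {M : Matrix (Fin n) (Fin n) ℝ}
    (hM : M.IsHermitian) (hMG : eigs M ∈ GammaK n k)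
    (b : OrthonormalBasis (Fin n) ℝ (EuclideanSpace ℝ (Fin n))) :
    (fun i => dotProduct (M *ᵥ ⇑(b i)) ⇑(b i)) ∈ GammaK n k := by
  have hlam : hM.eigenvalues ∈ GammaK n k := by
    have h : eigs M = hM.eigenvalues := dif_pos hM
    rwa [h] at hMG
  have heq : (fun i => dotProduct (M *ᵥ ⇑(b i)) ⇑(b i))
      = (Matrix.of fun i j => ⟪b i, hM.eigenvectorBasis j⟫ * ⟪hM.eigenvectorBasis j, b i⟫)
          *ᵥ hM.eigenvalues := by
    funext i
    rw [rayleigh_eq hM b i]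
    rfl
  rw [heq]
  exact ds_mulVec_mem hconv (ds_matrix_mem b hM.eigenvectorBasis) hlam

lemma eigs_combo_mem {n k : ℕ} (hconv : Convex ℝ (GammaK n k))
    {M N P : Matrix (Fin n) (Fin n) ℝ} (hM : M.IsHermitian) (hN : N.IsHermitian)
    {a b c : ℝ} (ha : 0 ≤ a) (hb : 0 ≤ b) (hc : 0 ≤ c)
    (hMG : eigs M ∈ GammaK n k) (hNG : eigs N ∈ GammaK n k)
    (hP : P = a • M + b • N + c • (1 : Matrix (Fin n) (Fin n) ℝ)) :
    eigs P ∈ GammaK n k := by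
  have hPh : P.IsHermitian := by
    rw [hP]
    unfold Matrix.IsHermitian at *
    rw [conjTranspose_add, conjTranspose_add, conjTranspose_smul, conjTranspose_smul,
      conjTranspose_smul, hM, hN, conjTranspose_one]
    simp [star_trivial]
  set β := hPh.eigenvectorBasis with hβ
  have heigs : eigs P = hPh.eigenvalues := dif_pos hPh
  have hnorm : ∀ i, dotProduct ⇑(β i) ⇑(β i) = 1 := by
    intro i
    refine (inner_eq_dot (β i) (β i)).symm.trans ?_
    exact (orthonormal_iff_ite.1 β.orthonormal i i).trans (by simp)
  have hray : ∀ i, hPh.eigenvalues i = dotProduct (P *ᵥ ⇑(β i)) ⇑(β i) := by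
    intro i
    rw [hPh.mulVec_eigenvectorBasis i, smul_dotProduct]
    rw [hnorm i]
    simp
  have hsplit : ∀ i, hPh.eigenvalues i
      = a * dotProduct (M *ᵥ ⇑(β i)) ⇑(β i)
        + b * dotProduct (N *ᵥ ⇑(β i)) ⇑(β i) + c := by
    intro i
    rw [hray i, hP]
    rw [Matrix.add_mulVec, Matrix.add_mulVec, Matrix.smul_mulVec,
      Matrix.smul_mulVec, Matrix.smul_mulVec, Matrix.one_mulVec]
    rw [add_dotProduct, add_dotProduct, smul_dotProduct,
      smul_dotProduct, smul_dotProduct, hnorm i]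
    simp
  have h1 := GammaK_smul ha (rayleigh_mem hconv hM hMG β)
  have h2 := GammaK_smul hb (rayleigh_mem hconv hN hNG β)
  have h3 : (fun _ : Fin n => c) ∈ GammaK n k := GammaK_const hc
  have h4 := GammaK_add hconv (GammaK_add hconv h1 h2) h3
  rw [heigs]
  convert h4 using 1
  funext i
  rw [hsplit i]
  rfl

/-! ### Calculus lemmas -/

section Calc
variable {n : ℕ} {Ω : Set (E n)} {u v : E n → ℝ} {x : E n}

lemma pd_differentiableAt (hΩ : IsOpen Ω) (hu : ContDiffOn ℝ 2 u Ω) (hx : x ∈ Ω) (j : Fin n) :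
    DifferentiableAt ℝ (fun y => pd u j y) x := by
  have h2 : ContDiffAt ℝ 2 u x := hu.contDiffAt (hΩ.mem_nhds hx)
  have h1 : ContDiffAt ℝ 1 (fderiv ℝ u) x := h2.fderiv_right (by norm_num)
  exact h1.differentiableAt (by norm_num) |>.clm_apply (differentiableAt_const _)

lemma hess_eq (hΩ : IsOpen Ω) (hu : ContDiffOn ℝ 2 u Ω) (hx : x ∈ Ω) (i j : Fin n) :
    hess u x i j = fderiv ℝ (fderiv ℝ u) x (EuclideanSpace.single i 1)
      (EuclideanSpace.single j 1) := by
  have h2 : ContDiffAt ℝ 2 u x := hu.contDiffAt (hΩ.mem_nhds hx)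
  have h1 : ContDiffAt ℝ 1 (fderiv ℝ u) x := h2.fderiv_right (by norm_num)
  have hd : DifferentiableAt ℝ (fderiv ℝ u) x := h1.differentiableAt (by norm_num)
  show fderiv ℝ (fun y => (fderiv ℝ u y) (EuclideanSpace.single j 1)) x _ = _
  rw [fderiv_clm_apply hd (differentiableAt_const _)]
  simp

lemma hess_symm (hΩ : IsOpen Ω) (hu : ContDiffOn ℝ 2 u Ω) (hx : x ∈ Ω) (i j : Fin n) :
    hess u x i j = hess u x j i := by
  have h2 : ContDiffAt ℝ 2 u x := hu.contDiffAt (hΩ.mem_nhds hx)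
  have h1 : ContDiffAt ℝ 1 (fderiv ℝ u) x := h2.fderiv_right (by norm_num)
  have hd : DifferentiableAt ℝ (fderiv ℝ u) x := h1.differentiableAt (by norm_num)
  have hf : ∀ᶠ y in nhds x, HasFDerivAt u (fderiv ℝ u y) y := by
    filter_upwards [hΩ.mem_nhds hx] with y hy
    exact ((hu.differentiableOn (by norm_num)).differentiableAt (hΩ.mem_nhds hy)).hasFDerivAt
  have hsym := second_derivative_symmetric_of_eventually hf hd.hasFDerivAt
  rw [hess_eq hΩ hu hx i j, hess_eq hΩ hu hx j i]
  exact hsym _ _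

lemma Amat_hermitian (hΩ : IsOpen Ω) (hu : ContDiffOn ℝ 2 u Ω) (hx : x ∈ Ω) :
    (Amat u x).IsHermitian := by
  refine Matrix.ext fun i j => ?_
  rw [Matrix.conjTranspose_apply]
  show star (Amat u x j i) = Amat u x i j
  rw [star_trivial]
  show u x * hess u x j i - (1 / 2) * gradsq u x * (if j = i then 1 else 0)
      = u x * hess u x i j - (1 / 2) * gradsq u x * (if i = j then 1 else 0)
  rw [hess_symm hΩ hu hx j i]
  congr 1
  simp [eq_comm]

lemma pd_add (hΩ : IsOpen Ω) (hu : ContDiffOn ℝ 2 u Ω) (hv : ContDiffOn ℝ 2 v Ω)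
    (hx : x ∈ Ω) (j : Fin n) :
    pd (fun y => u y + v y) j x = pd u j x + pd v j x := by
  unfold pd
  rw [fderiv_fun_add
    (((hu.differentiableOn (by norm_num)).differentiableAt (hΩ.mem_nhds hx)))
    (((hv.differentiableOn (by norm_num)).differentiableAt (hΩ.mem_nhds hx)))]
  rfl

lemma hess_add (hΩ : IsOpen Ω) (hu : ContDiffOn ℝ 2 u Ω) (hv : ContDiffOn ℝ 2 v Ω)
    (hx : x ∈ Ω) (i j : Fin n) :
    hess (fun y => u y + v y) x i j = hess u x i j + hess v x i j := by
  show pd (fun y => pd (fun z => u z + v z) j y) i x = pd (fun y => pd u j y) i x + _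
  unfold pd
  have hev : (fun y => fderiv ℝ (fun z => u z + v z) y (EuclideanSpace.single j 1))
      =ᶠ[nhds x] fun y => (fderiv ℝ u y (EuclideanSpace.single j 1))
        + (fderiv ℝ v y (EuclideanSpace.single j 1)) := by
    filter_upwards [hΩ.mem_nhds hx] with y hy
    have h := pd_add hΩ hu hv hy j
    simpa [pd] using h
  rw [hev.fderiv_eq]
  have d1 := pd_differentiableAt hΩ hu hx j
  have d2 := pd_differentiableAt hΩ hv hx j
  unfold pd at d1 d2
  rw [fderiv_fun_add d1 d2]
  rfl

lemma gradsq_add (hΩ : IsOpen Ω) (hu : ContDiffOn ℝ 2 u Ω) (hv : ContDiffOn ℝ 2 v Ω)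
    (hx : x ∈ Ω) :
    gradsq (fun y => u y + v y) x
      = gradsq u x + 2 * (∑ i, pd u i x * pd v i x) + gradsq v x := by
  unfold gradsq
  have h : ∀ i : Fin n, (pd (fun y => u y + v y) i x) ^ 2
      = pd u i x ^ 2 + 2 * (pd u i x * pd v i x) + pd v i x ^ 2 := by
    intro i
    rw [pd_add hΩ hu hv hx i]
    ring
  rw [Finset.sum_congr rfl fun i _ => h i]
  rw [Finset.sum_add_distrib, Finset.sum_add_distrib, Finset.mul_sum]

lemma Amat_combo (hΩ : IsOpen Ω) (hu : ContDiffOn ℝ 2 u Ω) (hv : ContDiffOn ℝ 2 v Ω)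
    (hx : x ∈ Ω) (hupos : 0 < u x) (hvpos : 0 < v x) :
    Amat (fun y => u y + v y) x
      = ((u x + v x) / u x) • Amat u x + ((u x + v x) / v x) • Amat v x
        + ((∑ i, (v x * pd u i x - u x * pd v i x) ^ 2) / (2 * u x * v x))
            • (1 : Matrix (Fin n) (Fin n) ℝ) := by
  have hS : (∑ i, (v x * pd u i x - u x * pd v i x) ^ 2)
      = v x ^ 2 * gradsq u x - 2 * (u x * v x) * (∑ i, pd u i x * pd v i x)
        + u x ^ 2 * gradsq v x := by
    unfold gradsq
    rw [Finset.mul_sum, Finset.mul_sum, Finset.mul_sum, ← Finset.sum_sub_distrib,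
      ← Finset.sum_add_distrib]
    exact Finset.sum_congr rfl fun i _ => by ring
  have hU : u x ≠ 0 := ne_of_gt hupos
  have hV : v x ≠ 0 := ne_of_gt hvpos
  refine Matrix.ext fun i j => ?_
  have hfx : (fun y => u y + v y) x = u x + v x := rfl
  simp only [Matrix.add_apply, Matrix.smul_apply, Matrix.one_apply, smul_eq_mul]
  show (fun y => u y + v y) x * hess (fun y => u y + v y) x i j
      - (1/2) * gradsq (fun y => u y + v y) x * (if i = j then 1 else 0)
    = ((u x + v x) / u x) * (u x * hess u x i j - (1/2) * gradsq u x * (if i = j then 1 else 0))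
      + ((u x + v x) / v x) * (v x * hess v x i j - (1/2) * gradsq v x * (if i = j then 1 else 0))
      + ((∑ i, (v x * pd u i x - u x * pd v i x) ^ 2) / (2 * u x * v x))
          * (if i = j then 1 else 0)
  rw [hess_add hΩ hu hv hx i j, gradsq_add hΩ hu hv hx, hS, hfx]
  by_cases hij : i = j
  · simp only [hij, if_pos rfl, mul_one]
    field_simp
    ring
  · simp only [if_neg hij, mul_zero, sub_zero, add_zero]
    field_simp

end Calc

theorem stmt2 (n k : ℕ) (hk : 1 ≤ k) (hkn : k ≤ n)
    (hconv : Convex ℝ (GammaK n k))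
    (Ω : Set (E n)) (hΩ : IsOpen Ω) (u v : E n → ℝ)
    (hu : ContDiffOn ℝ 2 u Ω) (hv : ContDiffOn ℝ 2 v Ω)
    (hupos : ∀ x ∈ Ω, 0 < u x) (hvpos : ∀ x ∈ Ω, 0 < v x)
    (huG : ∀ x ∈ Ω, eigs (Amat u x) ∈ GammaK n k)
    (hvG : ∀ x ∈ Ω, eigs (Amat v x) ∈ GammaK n k) :
    ∀ x ∈ Ω, eigs (Amat (fun y => u y + v y) x) ∈ GammaK n k := by
  intro x hx
  have hU := hupos x hx
  have hV := hvpos x hx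
  refine eigs_combo_mem hconv (Amat_hermitian hΩ hu hx) (Amat_hermitian hΩ hv hx)
    ?_ ?_ ?_ (huG x hx) (hvG x hx) (Amat_combo hΩ hu hv hx hU hV)
  · positivity
  · positivity
  · positivity
end
end

section
/- Let η : ℝⁿ → ℝ be defined by η(x) = C for |x| ≤ 1 and η(x) = (|x| − 1)³ + C for 1 ≤ |x| ≤ 2. Then η is C² on the ball B₂ = {|x| < 2}, and for every constant C > 3 the matrix A_{ij}(η) = η·η_{ij} − (1/2)|∇η|²δ_{ij} is positive semidefinite at every point of B₂. -/
open scoped BigOperators Classical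
open MeasureTheory

noncomputable section

def psi (s : ℝ) : ℝ := if s ≤ 1 then 0 else (Real.sqrt s - 1)^3
def psid1 (s : ℝ) : ℝ := if s ≤ 1 then 0 else 3*(Real.sqrt s - 1)^2 / (2*Real.sqrt s)
def psid2 (s : ℝ) : ℝ :=
  if s ≤ 1 then 0 else 3*(Real.sqrt s - 1)*(Real.sqrt s + 1) / (4*(Real.sqrt s)^3)

lemma sqrt_facts {s : ℝ} (hs : 1 < s) :
    1 < Real.sqrt s ∧ Real.sqrt s * Real.sqrt s = s ∧ Real.sqrt s ≤ s := by
  have h1 : 1 < Real.sqrt s := by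
    rw [show (1:ℝ) = Real.sqrt 1 by simp]
    exact Real.sqrt_lt_sqrt (by norm_num) hs
  have h2 : Real.sqrt s * Real.sqrt s = s := Real.mul_self_sqrt (by linarith)
  exact ⟨h1, h2, by nlinarith⟩

lemma psi_nonneg (s : ℝ) : 0 ≤ psi s := by
  unfold psi
  split
  · exact le_refl 0
  · rename_i h
    have h1 : (0:ℝ) ≤ Real.sqrt s - 1 := by
      have := (sqrt_facts (not_le.1 h)).1; linarith
    positivity

lemma psi_of_le {s : ℝ} (h : s ≤ 1) : psi s = 0 := if_pos h
lemma psid1_of_le {s : ℝ} (h : s ≤ 1) : psid1 s = 0 := if_pos h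
lemma psid2_of_le {s : ℝ} (h : s ≤ 1) : psid2 s = 0 := if_pos h

/-- quadratic bound gives derivative zero -/
lemma hasDerivAt_zero_of_quad {f : ℝ → ℝ} {a K : ℝ} (hfa : f a = 0)
    (h : ∀ s, |s - a| ≤ 1 → |f s| ≤ K * (s - a)^2) : HasDerivAt f 0 a := by
  rw [hasDerivAt_iff_isLittleO]
  rw [Asymptotics.isLittleO_iff]
  intro c hc
  have hK : 0 < |K| + 1 := by positivity
  rw [Metric.eventually_nhds_iff]
  refine ⟨min 1 (c / (|K| + 1)), by positivity, fun {y} hy => ?_⟩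
  rw [Real.dist_eq] at hy
  have h1 : |y - a| ≤ 1 := le_of_lt (lt_of_lt_of_le hy (min_le_left _ _))
  have h2 : |y - a| ≤ c / (|K| + 1) := le_of_lt (lt_of_lt_of_le hy (min_le_right _ _))
  have h3 := h y h1
  simp only [hfa, sub_zero, smul_zero, sub_zero]
  rw [Real.norm_eq_abs, Real.norm_eq_abs]
  have hsq : (y - a)^2 = |y - a| * |y - a| := by
    rw [← abs_mul, abs_of_nonneg (mul_self_nonneg _), sq]
  have hdiv : (|K| + 1) * (c / (|K| + 1)) = c := by field_simp
  have hKK := le_abs_self K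
  have habs := abs_nonneg (y - a)
  calc |f y| ≤ K * (y - a)^2 := h3
    _ ≤ c * |y - a| := by
        rw [hsq]
        nlinarith [mul_le_mul_of_nonneg_right h2 habs]

lemma hasDerivAt_psi (s : ℝ) : HasDerivAt psi (psid1 s) s := by
  rcases lt_trichotomy s 1 with h | h | h
  · have hev : psi =ᶠ[nhds s] (fun _ => (0:ℝ)) := by
      filter_upwards [Iio_mem_nhds h] with t ht
      exact psi_of_le (le_of_lt ht)
    rw [psid1_of_le h.le]
    exact (hasDerivAt_const s (0:ℝ)).congr_of_eventuallyEq hev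
  · subst h
    rw [psid1_of_le le_rfl]
    apply hasDerivAt_zero_of_quad (K := 1) (psi_of_le le_rfl)
    intro t ht
    rcases le_or_gt t 1 with h' | h'
    · rw [psi_of_le h']; simpa using sq_nonneg (t-1)
    · obtain ⟨h1, h2, h3⟩ := sqrt_facts h'
      rw [psi, if_neg (not_le.2 h')]
      have hge : (0:ℝ) ≤ Real.sqrt t - 1 := by linarith
      rw [abs_of_nonneg (by positivity)]
      have ht1 : t - 1 ≤ 1 := by rw [abs_le] at ht; linarith [ht.2]
      have e1 : (Real.sqrt t - 1)^3 ≤ (t - 1)^3 :=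
        pow_le_pow_left₀ hge (by linarith) 3
      have e2 : (t - 1)^3 ≤ (t-1)^2 := by nlinarith [sq_nonneg (t-1)]
      linarith
  · have hs0 : (0:ℝ) < s := by linarith
    obtain ⟨h1, h2, _⟩ := sqrt_facts h
    have hr0 : Real.sqrt s ≠ 0 := by positivity
    have hd := ((Real.hasDerivAt_sqrt hs0.ne').sub_const 1).pow 3
    have hev : psi =ᶠ[nhds s] (fun t => (Real.sqrt t - 1)^3) := by
      filter_upwards [Ioi_mem_nhds h] with t ht
      exact if_neg (not_le.2 ht)
    have hd2 := hd.congr_of_eventuallyEq hev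
    convert hd2 using 1
    · rfl
    · rfl
    rw [psid1, if_neg (not_le.2 h)]
    push_cast
    field_simp

lemma hasDerivAt_psid1 (s : ℝ) : HasDerivAt psid1 (psid2 s) s := by
  rcases lt_trichotomy s 1 with h | h | h
  · have hev : psid1 =ᶠ[nhds s] (fun _ => (0:ℝ)) := by
      filter_upwards [Iio_mem_nhds h] with t ht
      exact psid1_of_le (le_of_lt ht)
    rw [psid2_of_le h.le]
    exact (hasDerivAt_const s (0:ℝ)).congr_of_eventuallyEq hev
  · subst h
    rw [psid2_of_le le_rfl]
    apply hasDerivAt_zero_of_quad (K := 3/2) (psid1_of_le le_rfl)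
    intro t ht
    rcases le_or_gt t 1 with h' | h'
    · rw [psid1_of_le h']; simpa using by positivity
    · obtain ⟨h1, h2, h3⟩ := sqrt_facts h'
      rw [psid1, if_neg (not_le.2 h')]
      have hr0 : (0:ℝ) < Real.sqrt t := by linarith
      rw [abs_of_nonneg (by positivity)]
      rw [div_le_iff₀ (by positivity)]
      have e1 : (Real.sqrt t - 1)^2 ≤ (t - 1)^2 :=
        pow_le_pow_left₀ (by linarith) (by linarith) 2
      nlinarith [sq_nonneg (t-1), mul_nonneg (sq_nonneg (t-1)) (by linarith : (0:ℝ) ≤ Real.sqrt t - 1)]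
  · have hs0 : (0:ℝ) < s := by linarith
    obtain ⟨h1, h2, _⟩ := sqrt_facts h
    have hr0 : (0:ℝ) < Real.sqrt s := by linarith
    have hnum := (((Real.hasDerivAt_sqrt hs0.ne').sub_const 1).pow 2).const_mul 3
    have hden : HasDerivAt (fun t => 2*Real.sqrt t) (2 * (1 / (2 * Real.sqrt s))) s :=
      (Real.hasDerivAt_sqrt hs0.ne').const_mul 2
    have hd := hnum.div hden (by positivity)
    have hev : psid1 =ᶠ[nhds s] (fun t => 3*(Real.sqrt t - 1)^2 / (2*Real.sqrt t)) := by
      filter_upwards [Ioi_mem_nhds h] with t ht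
      exact if_neg (not_le.2 ht)
    have hd2 := hd.congr_of_eventuallyEq hev
    convert hd2 using 1
    · rfl
    · rfl
    rw [psid2, if_neg (not_le.2 h)]
    have hr0' : Real.sqrt s ≠ 0 := ne_of_gt hr0
    push_cast
    simp only [Pi.pow_apply]
    field_simp
    ring

lemma continuous_psid2 : Continuous psid2 := by
  rw [continuous_iff_continuousAt]
  intro s
  rcases lt_trichotomy s 1 with h | h | h
  · have hev : psid2 =ᶠ[nhds s] (fun _ => (0:ℝ)) := by
      filter_upwards [Iio_mem_nhds h] with t ht
      exact psid2_of_le (le_of_lt ht)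
    exact ContinuousAt.congr continuousAt_const hev.symm
  · subst h
    have key : ∀ t : ℝ, |t - 1| ≤ 1 → |psid2 t| ≤ (9/4) * |t - 1| := by
      intro t ht
      rcases le_or_gt t 1 with h' | h'
      · rw [psid2_of_le h']
        simp only [abs_zero]
        positivity
      · obtain ⟨h1, h2, h3⟩ := sqrt_facts h'
        have ht2 : t ≤ 2 := by rw [abs_le] at ht; linarith [ht.2]
        have hr0 : (0:ℝ) < Real.sqrt t := by linarith
        rw [psid2, if_neg (not_le.2 h'), abs_of_nonneg (by apply div_nonneg <;> nlinarith),
          abs_of_nonneg (by linarith), div_le_iff₀ (by positivity)]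
        have hr3 : 1 ≤ Real.sqrt t ^ 3 := by nlinarith
        nlinarith [mul_le_mul_of_nonneg_left hr3 (by linarith : (0:ℝ) ≤ 9*(t-1))]
    rw [ContinuousAt, psid2_of_le le_rfl]
    apply squeeze_zero_norm' (a := fun t => (9/4) * |t - 1|)
    · rw [Metric.eventually_nhds_iff]
      exact ⟨1, one_pos, fun {y} hy => key y (le_of_lt (by rwa [Real.dist_eq] at hy))⟩
    · have hca : Continuous (fun t : ℝ => (9/4) * |t - 1|) := by continuity
      have h0 := hca.tendsto 1
      simpa using h0
  · have hev : psid2 =ᶠ[nhds s] (fun t => 3*(Real.sqrt t - 1)*(Real.sqrt t + 1) / (4*(Real.sqrt t)^3)) := by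
      filter_upwards [Ioi_mem_nhds h] with t ht
      exact if_neg (not_le.2 ht)
    have hs0 : (0:ℝ) < s := by linarith
    have hr0 : (0:ℝ) < Real.sqrt s := Real.sqrt_pos.2 hs0
    have hc : ContinuousAt (fun t => 3*(Real.sqrt t - 1)*(Real.sqrt t + 1) / (4*(Real.sqrt t)^3)) s := by
      apply ContinuousAt.div
      · fun_prop
      · fun_prop
      · positivity
    exact hc.congr hev.symm

lemma contDiff_psi : ContDiff ℝ 2 psi := by
  have hd1 : deriv psi = psid1 := funext fun s => (hasDerivAt_psi s).deriv
  have hd2 : deriv psid1 = psid2 := funext fun s => (hasDerivAt_psid1 s).deriv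
  rw [show (2 : WithTop ℕ∞) = 1 + 1 from rfl, contDiff_succ_iff_deriv]
  refine ⟨fun s => (hasDerivAt_psi s).differentiableAt, by simp, ?_⟩
  rw [hd1, contDiff_one_iff_deriv, hd2]
  exact ⟨fun s => (hasDerivAt_psid1 s).differentiableAt, continuous_psid2⟩




def nsq {n : ℕ} (x : E n) : ℝ := ∑ i, (x i)^2

lemma nsq_nonneg {n : ℕ} (x : E n) : 0 ≤ nsq x :=
  Finset.sum_nonneg fun i _ => sq_nonneg _

lemma nsq_eq {n : ℕ} (x : E n) : nsq x = ‖x‖^2 := by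
  rw [EuclideanSpace.norm_eq, Real.sq_sqrt (by positivity)]
  unfold nsq
  simp [Real.norm_eq_abs, sq_abs]

lemma contDiff_nsq {n : ℕ} : ContDiff ℝ 2 (nsq (n := n)) :=
  ContDiff.sum fun i _ => ((EuclideanSpace.proj (𝕜 := ℝ) i).contDiff (n := 2)).pow 2

def gcl {n : ℕ} (x : E n) : E n →L[ℝ] ℝ :=
  ∑ i, (2 * x i) • (EuclideanSpace.proj i : E n →L[ℝ] ℝ)

lemma hasFDerivAt_nsq {n : ℕ} (x : E n) : HasFDerivAt nsq (gcl x) x := by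
  have h : ∀ i : Fin n, HasFDerivAt (fun y : E n => (y i)^2)
      ((2 * x i) • (EuclideanSpace.proj i : E n →L[ℝ] ℝ)) x := by
    intro i
    have hp : HasFDerivAt (fun y : E n => y i)
        (EuclideanSpace.proj i : E n →L[ℝ] ℝ) x :=
      (EuclideanSpace.proj (𝕜 := ℝ) i).hasFDerivAt
    have hm := hp.fun_mul hp
    have h2 : (fun y : E n => (y i)^2) = fun y => y i * y i := by
      funext y; ring
    rw [h2]
    convert hm using 1
    · rfl
    · rfl
    · rfl
    · rfl
    · rfl
    rw [two_mul, add_smul]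
  exact HasFDerivAt.fun_sum fun i _ => h i

lemma gcl_apply {n : ℕ} (x : E n) (j : Fin n) :
    gcl x (EuclideanSpace.single j 1) = 2 * x j := by
  rw [gcl, ContinuousLinearMap.sum_apply]
  have h : ∀ i : Fin n, ((2 * x i) • (EuclideanSpace.proj i : E n →L[ℝ] ℝ))
      (EuclideanSpace.single j 1) = if i = j then 2 * x i else 0 := by
    intro i
    rw [ContinuousLinearMap.smul_apply]
    have hp : (EuclideanSpace.proj i : E n →L[ℝ] ℝ) (EuclideanSpace.single j 1)
        = if i = j then 1 else 0 := by
      simp [EuclideanSpace.single_apply]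
    rw [hp]
    split <;> simp
  rw [Finset.sum_congr rfl fun i _ => h i, Finset.sum_ite_eq' Finset.univ j (fun i => 2 * x i)]
  simp

def etaF (n : ℕ) (C : ℝ) : E n → ℝ := fun x => psi (nsq x) + C

lemma hasFDerivAt_etaF {n : ℕ} (C : ℝ) (x : E n) :
    HasFDerivAt (etaF n C) (psid1 (nsq x) • gcl x) x :=
  ((hasDerivAt_psi (nsq x)).comp_hasFDerivAt x (hasFDerivAt_nsq x)).add_const C

lemma pd_etaF {n : ℕ} (C : ℝ) (x : E n) (j : Fin n) :
    pd (etaF n C) j x = 2 * psid1 (nsq x) * x j := by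
  rw [pd, (hasFDerivAt_etaF C x).fderiv, ContinuousLinearMap.smul_apply, gcl_apply]
  simp only [smul_eq_mul]
  ring



lemma hess_etaF {n : ℕ} (C : ℝ) (x : E n) (i j : Fin n) :
    hess (etaF n C) x i j
      = 4 * psid2 (nsq x) * x i * x j
        + 2 * psid1 (nsq x) * (if i = j then 1 else 0) := by
  have hfun : (fun y => pd (etaF n C) j y) = fun y : E n => (2 * psid1 (nsq y)) * y j := by
    funext y; rw [pd_etaF]
  rw [hess]
  show pd (fun y => pd (etaF n C) j y) i x = _
  rw [pd, hfun]
  have hc : HasFDerivAt (fun y : E n => 2 * psid1 (nsq y))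
      ((2 * psid2 (nsq x)) • gcl x) x := by
    have h1 := (hasDerivAt_psid1 (nsq x)).comp_hasFDerivAt x (hasFDerivAt_nsq x)
    have h2 := h1.const_mul (2:ℝ)
    convert h2 using 1
    · rfl
    · rfl
    · rfl
    · rfl
    · rfl
    · rfl
    rw [smul_smul]
  have hj : HasFDerivAt (fun y : E n => y j)
      (EuclideanSpace.proj j : E n →L[ℝ] ℝ) x :=
    (EuclideanSpace.proj (𝕜 := ℝ) j).hasFDerivAt
  have hm := hc.fun_mul hj
  rw [hm.fderiv, ContinuousLinearMap.add_apply, ContinuousLinearMap.smul_apply,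
    ContinuousLinearMap.smul_apply, ContinuousLinearMap.smul_apply, gcl_apply]
  have hp : (EuclideanSpace.proj j : E n →L[ℝ] ℝ) (EuclideanSpace.single i 1)
      = if j = i then 1 else 0 := by
    simp [EuclideanSpace.single_apply]
  rw [hp]
  simp only [smul_eq_mul]
  rcases eq_or_ne i j with rfl | hne
  · simp only [if_pos rfl]
    ring
  · rw [if_neg hne, if_neg (Ne.symm hne)]; ring

lemma gradsq_etaF {n : ℕ} (C : ℝ) (x : E n) :
    gradsq (etaF n C) x = 4 * psid1 (nsq x)^2 * nsq x := by
  rw [gradsq]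
  calc ∑ i, (pd (etaF n C) i x)^2
      = ∑ i, (4 * psid1 (nsq x)^2) * (x i)^2 := by
        refine Finset.sum_congr rfl fun i _ => ?_
        rw [pd_etaF]; ring
    _ = 4 * psid1 (nsq x)^2 * nsq x := by
        rw [← Finset.mul_sum]; rfl

lemma Amat_etaF {n : ℕ} (C : ℝ) (x : E n) (i j : Fin n) :
    Amat (etaF n C) x i j
      = (4 * (psi (nsq x) + C) * psid2 (nsq x)) * x i * x j
        + (2 * (psi (nsq x) + C) * psid1 (nsq x) - 2 * psid1 (nsq x)^2 * nsq x)
          * (if i = j then 1 else 0) := by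
  rw [Amat]
  show etaF n C x * hess (etaF n C) x i j - 1/2 * gradsq (etaF n C) x * _ = _
  rw [hess_etaF, gradsq_etaF, etaF]
  split <;> ring

open scoped Matrix in
lemma psd_aux {n : ℕ} (x : E n) (a b : ℝ) (ha : 0 ≤ a) (hb : 0 ≤ b) :
    (Matrix.of fun i j : Fin n => a * x i * x j + b * (if i = j then 1 else 0)).PosSemidef := by
  rw [Matrix.posSemidef_iff_dotProduct_mulVec]
  constructor
  · ext i j
    simp only [Matrix.conjTranspose_apply, Matrix.of_apply, star_trivial]
    rcases eq_or_ne i j with rfl | hne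
    · ring
    · simp only [if_neg hne, if_neg (Ne.symm hne)]
      ring
  · intro v
    have hstar : star v = v := by funext i; exact star_trivial _
    rw [hstar]
    have key : v ⬝ᵥ ((Matrix.of fun i j : Fin n =>
          a * x i * x j + b * (if i = j then 1 else 0)) *ᵥ v)
        = a * (∑ i, x i * v i)^2 + b * ∑ i, (v i)^2 := by
      simp only [dotProduct, Matrix.mulVec, Matrix.of_apply]
      calc ∑ i, v i * (∑ j, (a * x i * x j + b * (if i = j then 1 else 0)) * v j)
          = ∑ i, v i * (a * x i * (∑ j, x j * v j) + b * v i) := by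
            refine Finset.sum_congr rfl fun i _ => ?_
            congr 1
            have hterm : ∀ j : Fin n,
                (a * x i * x j + b * (if i = j then 1 else 0)) * v j
                  = a * x i * (x j * v j) + (if i = j then b * v j else 0) := by
              intro j
              rcases eq_or_ne i j with rfl | hne
              · simp; ring
              · simp [hne]; ring
            rw [Finset.sum_congr rfl fun j _ => hterm j, Finset.sum_add_distrib,
              ← Finset.mul_sum, Finset.sum_ite_eq Finset.univ i (fun j => b * v j)]
            simp
        _ = a * (∑ i, x i * v i)^2 + b * ∑ i, (v i)^2 := by
            simp only [mul_add]
            rw [Finset.sum_add_distrib]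
            congr 1
            · calc ∑ i, v i * (a * x i * (∑ j, x j * v j))
                  = (∑ i, (x i * v i)) * (a * (∑ j, x j * v j)) := by
                    rw [Finset.sum_mul]
                    exact Finset.sum_congr rfl fun i _ => by ring
                _ = a * (∑ i, x i * v i)^2 := by ring
            · rw [Finset.mul_sum]
              exact Finset.sum_congr rfl fun i _ => by ring
    rw [key]
    have h1 : 0 ≤ a * (∑ i, x i * v i)^2 := mul_nonneg ha (sq_nonneg _)
    have h2 : 0 ≤ b * ∑ i, (v i)^2 :=
      mul_nonneg hb (Finset.sum_nonneg fun i _ => sq_nonneg _)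
    linarith

lemma alpha_nonneg {C s : ℝ} (hC : 3 < C) : 0 ≤ 4 * (psi s + C) * psid2 s := by
  rcases le_or_gt s 1 with h | h
  · rw [psid2_of_le h]; ring_nf; exact le_refl 0
  · obtain ⟨h1, h2, _⟩ := sqrt_facts h
    have hP : 0 ≤ psi s + C := by nlinarith [psi_nonneg s]
    apply mul_nonneg (by linarith)
    rw [psid2, if_neg (not_le.2 h)]
    apply div_nonneg <;> nlinarith

lemma beta_nonneg {C s : ℝ} (hC : 3 < C) (hs4 : s < 4) :
    0 ≤ 2 * (psi s + C) * psid1 s - 2 * psid1 s^2 * s := by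
  rcases le_or_gt s 1 with h | h
  · rw [psid1_of_le h]; ring_nf; exact le_refl 0
  · obtain ⟨h1, h2, _⟩ := sqrt_facts h
    have hr2 : Real.sqrt s < 2 := by nlinarith
    have hr0 : (0:ℝ) < Real.sqrt s := by linarith
    rw [psi, if_neg (not_le.2 h), psid1, if_neg (not_le.2 h)]
    set r := Real.sqrt s with hr
    have key : 2 * ((r-1)^3 + C) * (3*(r-1)^2 / (2*r)) - 2 * (3*(r-1)^2 / (2*r))^2 * s
        = 3*(r-1)^2 * (2*((r-1)^3 + C) - 3*(r-1)^2*r) / (2*r) := by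
      rw [← h2]
      field_simp
    rw [key]
    apply div_nonneg _ (by linarith)
    apply mul_nonneg (by positivity)
    have e1 : (r-1)^2 ≤ 1 := by nlinarith
    have e2 : (r-1)^2 * (r+2) ≤ 4 := by nlinarith
    nlinarith

theorem stmt10 (n : ℕ) (C : ℝ) (η : E n → ℝ)
    (hη : ∀ x, η x = if ‖x‖ ≤ 1 then C else (‖x‖ - 1) ^ 3 + C) :
    ContDiffOn ℝ 2 η (Metric.ball (0 : E n) 2) ∧
      (3 < C → ∀ x ∈ Metric.ball (0 : E n) 2, (Amat η x).PosSemidef) := by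
  have heq : η = etaF n C := by
    funext x
    rw [hη]
    rcases le_or_gt ‖x‖ 1 with h | h
    · rw [if_pos h, etaF, psi_of_le, zero_add]
      rw [nsq_eq]
      nlinarith [norm_nonneg x]
    · rw [if_neg (not_le.2 h)]
      show (‖x‖ - 1) ^ 3 + C = psi (nsq x) + C
      rw [psi, if_neg (by rw [nsq_eq]; push_neg; nlinarith [norm_nonneg x]),
        nsq_eq, Real.sqrt_sq (norm_nonneg x)]
  subst heq
  refine ⟨?_, ?_⟩
  · exact ((contDiff_psi.comp contDiff_nsq).add contDiff_const).contDiffOn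
  · intro hC x hx
    have hs4 : nsq x < 4 := by
      have hx2 : ‖x‖ < 2 := mem_ball_zero_iff.1 hx
      rw [nsq_eq]
      nlinarith [norm_nonneg x]
    have hA : Amat (etaF n C) x = Matrix.of fun i j =>
        (4 * (psi (nsq x) + C) * psid2 (nsq x)) * x i * x j
        + (2 * (psi (nsq x) + C) * psid1 (nsq x) - 2 * psid1 (nsq x)^2 * nsq x)
          * (if i = j then 1 else 0) := by
      ext i j
      simp only [Matrix.of_apply]
      exact Amat_etaF C x i j
    rw [hA]
    exact psd_aux x _ _ (alpha_nonneg hC) (beta_nonneg hC hs4)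
end
end

section
/- Let u be a positive C² function on B₃ ⊆ ℝⁿ with λ(A(u)) ∈ Γ_k pointwise, 1 ≤ k ≤ n/2. Then there is a constant C depending only on n and k such that sup_{B₁} u ≤ C·‖u‖_{L¹(B₂)}. -/
open scoped BigOperators Classical
open MeasureTheory

noncomputable section

namespace SH18


lemma hasDerivAt_maxpow (m : ℕ) (hm : 2 ≤ m) (t : ℝ) :
    HasDerivAt (fun t : ℝ => (max t 0)^m) (m*(max t 0)^(m-1)) t := by
  rcases lt_trichotomy t 0 with ht | ht | ht
  · have h0 : (fun t : ℝ => (max t 0)^m) =ᶠ[nhds t] fun _ => (0:ℝ) := by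
      filter_upwards [Iio_mem_nhds ht] with s hs
      simp [max_eq_right (le_of_lt (Set.mem_Iio.1 hs)), zero_pow (by omega : m ≠ 0)]
    have h := (hasDerivAt_const t (0:ℝ)).congr_of_eventuallyEq h0
    simpa [max_eq_right ht.le, zero_pow (by omega : m - 1 ≠ 0)] using h
  · subst ht
    rw [hasDerivAt_iff_tendsto_slope]
    have key : ∀ s ∈ Metric.ball (0:ℝ) 1 \ {0}, ‖slope (fun t : ℝ => (max t 0)^m) 0 s‖ ≤ ‖s‖ := by
      intro s hs
      rw [slope_def_field]
      rcases le_or_gt s 0 with h | h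
      · simp [max_eq_right h, zero_pow (by omega : m ≠ 0)]
      · rw [max_eq_left h.le, max_self, zero_pow (by omega : m ≠ 0), sub_zero, sub_zero]
        rw [div_eq_mul_inv, ← pow_sub_one_mul (by omega : m ≠ 0) s, mul_assoc,
          mul_inv_cancel₀ h.ne', mul_one]
        have hs1 : |s| ≤ 1 := by
          have := hs.1; rw [Metric.mem_ball, Real.dist_eq, sub_zero] at this; exact this.le
        calc ‖s ^ (m-1)‖ = |s|^(m-1) := by rw [Real.norm_eq_abs, abs_pow]
          _ ≤ |s|^1 := pow_le_pow_of_le_one (abs_nonneg s) hs1 (by omega)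
          _ = ‖s‖ := by rw [pow_one, Real.norm_eq_abs]
    have hmem : Metric.ball (0:ℝ) 1 \ {0} ∈ nhdsWithin (0:ℝ) {(0:ℝ)}ᶜ := by
      rw [Set.diff_eq]
      exact Filter.inter_mem (mem_nhdsWithin_of_mem_nhds (Metric.ball_mem_nhds _ one_pos))
        self_mem_nhdsWithin
    have := squeeze_zero_norm' (Filter.eventually_iff_exists_mem.2 ⟨_, hmem, key⟩)
      (tendsto_nhdsWithin_of_tendsto_nhds (continuous_norm.tendsto' 0 0 (by simp)))
    simpa [max_self, zero_pow (by omega : m - 1 ≠ 0)] using this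
  · have h0 : (fun t : ℝ => (max t 0)^m) =ᶠ[nhds t] fun s => s^m := by
      filter_upwards [Ioi_mem_nhds ht] with s hs
      simp [max_eq_left (le_of_lt (Set.mem_Ioi.1 hs))]
    have h := (hasDerivAt_pow m t).congr_of_eventuallyEq h0
    simpa [max_eq_left ht.le] using h



def a0 (s : ℝ) : ℝ := (max (1-s) 0)^3
def a1 (s : ℝ) : ℝ := -(3*(max (1-s) 0)^2)
def a2 (s : ℝ) : ℝ := 6*(max (1-s) 0)
def b0 (s : ℝ) : ℝ := (max (s-4⁻¹) 0)^3
def b1 (s : ℝ) : ℝ := 3*(max (s-4⁻¹) 0)^2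
def b2 (s : ℝ) : ℝ := 6*(max (s-4⁻¹) 0)
def den (s : ℝ) : ℝ := a0 s + b0 s
def chi (s : ℝ) : ℝ := a0 s / den s
def chi1 (s : ℝ) : ℝ := (a1 s * b0 s - a0 s * b1 s) / (den s)^2
def chi2 (s : ℝ) : ℝ :=
  ((a2 s * b0 s - a0 s * b2 s) * den s - 2*(a1 s * b0 s - a0 s * b1 s)*(a1 s + b1 s)) / (den s)^3

lemma a0_nonneg (s : ℝ) : 0 ≤ a0 s := pow_nonneg (le_max_right _ _) 3
lemma b0_nonneg (s : ℝ) : 0 ≤ b0 s := pow_nonneg (le_max_right _ _) 3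

lemma den_pos (s : ℝ) : 0 < den s := by
  rcases le_or_gt s (5/8) with h | h
  · have h1 : (0:ℝ) < 1 - s := by linarith
    have : 0 < a0 s := by
      have : max (1-s) 0 = 1 - s := max_eq_left h1.le
      rw [a0, this]; positivity
    have := b0_nonneg s; unfold den; linarith
  · have h1 : (0:ℝ) < s - 4⁻¹ := by linarith
    have : 0 < b0 s := by
      have : max (s-4⁻¹) 0 = s - 4⁻¹ := max_eq_left h1.le
      rw [b0, this]; positivity
    have := a0_nonneg s; unfold den; linarith

lemma hasDerivAt_a0 (s : ℝ) : HasDerivAt a0 (a1 s) s := by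
  have h := (hasDerivAt_maxpow 3 (by norm_num) (1 - s)).comp s ((hasDerivAt_id s).const_sub 1)
  have h' : HasDerivAt a0 ((3:ℕ) * max (1 - s) 0 ^ (3 - 1) * -1) s := h
  convert h' using 1
  rw [a1]; push_cast; ring

lemma hasDerivAt_a1 (s : ℝ) : HasDerivAt a1 (a2 s) s := by
  have h := (hasDerivAt_maxpow 2 (by norm_num) (1 - s)).comp s ((hasDerivAt_id s).const_sub 1)
  have h' : HasDerivAt (fun s : ℝ => (max (1-s) 0)^2) ((2:ℕ) * max (1 - s) 0 ^ (2 - 1) * -1) s := h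
  have h'' := (h'.const_mul (3:ℝ)).neg
  have h3 : a1 = fun x : ℝ => -(3 * (max (1-x) 0) ^ 2) := by funext x; rw [a1]
  rw [h3]
  refine h''.congr_deriv ?_
  rw [a2]; push_cast; ring

lemma hasDerivAt_b0 (s : ℝ) : HasDerivAt b0 (b1 s) s := by
  have h := (hasDerivAt_maxpow 3 (by norm_num) (s - 4⁻¹)).comp s ((hasDerivAt_id s).sub_const 4⁻¹)
  have h' : HasDerivAt b0 ((3:ℕ) * max (s - 4⁻¹) 0 ^ (3 - 1) * 1) s := h
  convert h' using 1
  rw [b1]; push_cast; ring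

lemma hasDerivAt_b1 (s : ℝ) : HasDerivAt b1 (b2 s) s := by
  have h := (hasDerivAt_maxpow 2 (by norm_num) (s - 4⁻¹)).comp s ((hasDerivAt_id s).sub_const 4⁻¹)
  have h' : HasDerivAt (fun s : ℝ => (max (s-4⁻¹) 0)^2) ((2:ℕ) * max (s - 4⁻¹) 0 ^ (2 - 1) * 1) s := h
  have h'' := h'.const_mul (3:ℝ)
  have h3 : b1 = fun x : ℝ => 3 * (max (x-4⁻¹) 0) ^ 2 := by funext x; rw [b1]
  rw [h3]
  refine h''.congr_deriv ?_
  rw [b2]; push_cast; ring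

lemma hasDerivAt_den (s : ℝ) : HasDerivAt den (a1 s + b1 s) s :=
  (hasDerivAt_a0 s).add (hasDerivAt_b0 s)

lemma hasDerivAt_chi (s : ℝ) : HasDerivAt chi (chi1 s) s := by
  have h := (hasDerivAt_a0 s).div (hasDerivAt_den s) (den_pos s).ne'
  refine h.congr_deriv ?_
  have hd := (den_pos s).ne'
  rw [chi1]; unfold den at *; field_simp; ring

lemma hasDerivAt_chi1 (s : ℝ) : HasDerivAt chi1 (chi2 s) s := by
  have hN : HasDerivAt (fun s => a1 s * b0 s - a0 s * b1 s)
      (a2 s * b0 s + a1 s * b1 s - (a1 s * b1 s + a0 s * b2 s)) s :=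
    ((hasDerivAt_a1 s).mul (hasDerivAt_b0 s)).sub ((hasDerivAt_a0 s).mul (hasDerivAt_b1 s))
  have hD : HasDerivAt (fun s => (den s)^2) ((2:ℕ) * (den s)^(2-1) * (a1 s + b1 s)) s :=
    (hasDerivAt_den s).pow 2
  have h := hN.div hD (by have := den_pos s; positivity)
  refine h.congr_deriv ?_
  have hd := (den_pos s).ne'
  rw [chi2]; field_simp; ring

lemma cont_a0 : Continuous a0 := by unfold a0; fun_prop
lemma cont_a1 : Continuous a1 := by unfold a1; fun_prop
lemma cont_a2 : Continuous a2 := by unfold a2; fun_prop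
lemma cont_b0 : Continuous b0 := by unfold b0; fun_prop
lemma cont_b1 : Continuous b1 := by unfold b1; fun_prop
lemma cont_b2 : Continuous b2 := by unfold b2; fun_prop
lemma cont_den : Continuous den := cont_a0.add cont_b0

lemma cont_chi : Continuous chi :=
  cont_a0.div cont_den (fun s => (den_pos s).ne')

lemma cont_chi1 : Continuous chi1 :=
  ((cont_a1.mul cont_b0).sub (cont_a0.mul cont_b1)).div (cont_den.pow 2)
    (fun s => pow_ne_zero 2 (den_pos s).ne')

lemma cont_chi2 : Continuous chi2 :=
  ((((cont_a2.mul cont_b0).sub (cont_a0.mul cont_b2)).mul cont_den).sub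
    ((continuous_const.mul ((cont_a1.mul cont_b0).sub (cont_a0.mul cont_b1))).mul
      (cont_a1.add cont_b1))).div (cont_den.pow 3)
    (fun s => pow_ne_zero 3 (den_pos s).ne')

-- region lemmas
lemma bmax_eq_zero {s : ℝ} (h : s ≤ 4⁻¹) : max (s - 4⁻¹) 0 = 0 :=
  max_eq_right (by linarith)
lemma amax_eq_zero {s : ℝ} (h : 1 ≤ s) : max (1 - s) 0 = 0 :=
  max_eq_right (by linarith)

lemma chi_eq_one {s : ℝ} (h : s ≤ 4⁻¹) : chi s = 1 := by
  have hb : b0 s = 0 := by rw [b0, bmax_eq_zero h]; ring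
  have ha : a0 s ≠ 0 := by
    have h2 : den s = a0 s := by rw [den, hb]; ring
    have h3 := den_pos s; rw [h2] at h3; exact h3.ne'
  rw [chi, den, hb, add_zero, div_self ha]

lemma chi1_eq_zero {s : ℝ} (h : s ≤ 4⁻¹) : chi1 s = 0 := by
  have hb : b0 s = 0 := by rw [b0, bmax_eq_zero h]; ring
  have hb1 : b1 s = 0 := by rw [b1, bmax_eq_zero h]; ring
  rw [chi1, hb, hb1]; ring

lemma chi2_eq_zero {s : ℝ} (h : s ≤ 4⁻¹) : chi2 s = 0 := by
  have hb : b0 s = 0 := by rw [b0, bmax_eq_zero h]; ring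
  have hb1 : b1 s = 0 := by rw [b1, bmax_eq_zero h]; ring
  have hb2 : b2 s = 0 := by rw [b2, bmax_eq_zero h]; ring
  rw [chi2, hb, hb1, hb2]; ring

lemma chi_eq_zero {s : ℝ} (h : 1 ≤ s) : chi s = 0 := by
  have ha : a0 s = 0 := by rw [a0, amax_eq_zero h]; ring
  rw [chi, ha]; ring

lemma chi1_eq_zero' {s : ℝ} (h : 1 ≤ s) : chi1 s = 0 := by
  have ha : a0 s = 0 := by rw [a0, amax_eq_zero h]; ring
  have ha1 : a1 s = 0 := by rw [a1, amax_eq_zero h]; ring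
  rw [chi1, ha, ha1]; ring

lemma chi2_eq_zero' {s : ℝ} (h : 1 ≤ s) : chi2 s = 0 := by
  have ha : a0 s = 0 := by rw [a0, amax_eq_zero h]; ring
  have ha1 : a1 s = 0 := by rw [a1, amax_eq_zero h]; ring
  have ha2 : a2 s = 0 := by rw [a2, amax_eq_zero h]; ring
  rw [chi2, ha, ha1, ha2]; ring

lemma chi_nonneg (s : ℝ) : 0 ≤ chi s := div_nonneg (a0_nonneg s) (den_pos s).le
lemma chi_le_one (s : ℝ) : chi s ≤ 1 := by
  rw [chi, div_le_one (den_pos s)]; unfold den; have := b0_nonneg s; linarith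

/-- A uniform bound for |chi1| and |chi2|. -/
lemma chi_deriv_bound : ∃ K : ℝ, 0 < K ∧ ∀ s : ℝ, |chi1 s| ≤ K ∧ |chi2 s| ≤ K := by
  obtain ⟨K1, hK1⟩ := (isCompact_Icc (a := (0:ℝ)) (b := 1)).exists_bound_of_continuousOn
    cont_chi1.continuousOn
  obtain ⟨K2, hK2⟩ := (isCompact_Icc (a := (0:ℝ)) (b := 1)).exists_bound_of_continuousOn
    cont_chi2.continuousOn
  refine ⟨|K1| + |K2| + 1, by positivity, fun s => ?_⟩
  rcases le_or_gt s 4⁻¹ with h | h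
  · rw [chi1_eq_zero h, chi2_eq_zero h]
    constructor <;> · simp; positivity
  rcases le_or_gt 1 s with h1 | h1
  · rw [chi1_eq_zero' h1, chi2_eq_zero' h1]
    constructor <;> · simp; positivity
  · have hs : s ∈ Set.Icc (0:ℝ) 1 := ⟨by linarith [show (0:ℝ) < 4⁻¹ by norm_num], h1.le⟩
    have g1 := hK1 s hs; have g2 := hK2 s hs
    rw [Real.norm_eq_abs] at g1 g2
    have l1 := le_abs_self K1; have l2 := le_abs_self K2
    have n1 := abs_nonneg K1; have n2 := abs_nonneg K2
    exact ⟨by linarith, by linarith⟩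


/-! ### The kernel `G` -/


def Gk (n : ℕ) (t : ℝ) : ℝ := ∫ τ in t..(9:ℝ), τ ^ (-(n:ℝ)/2)

lemma rpow_contOn {c : ℝ} : ContinuousOn (fun τ : ℝ => τ ^ c) (Set.Ioi (0:ℝ)) := by
  intro x hx
  exact (Real.continuousAt_rpow_const x c (Or.inl (ne_of_gt hx))).continuousWithinAt

lemma Gk_integrable {n : ℕ} {x y : ℝ} (hx : 0 < x) (hy : 0 < y) :
    IntervalIntegrable (fun τ : ℝ => τ ^ (-(n:ℝ)/2)) volume x y := by
  apply ContinuousOn.intervalIntegrable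
  apply rpow_contOn.mono
  intro τ hτ
  rcases le_total x y with h | h
  · rw [Set.uIcc_of_le h] at hτ; exact lt_of_lt_of_le hx hτ.1
  · rw [Set.uIcc_of_ge h] at hτ; exact lt_of_lt_of_le hy hτ.1

lemma hasDerivAt_Gk (n : ℕ) {t : ℝ} (ht : 0 < t) :
    HasDerivAt (Gk n) (-(t ^ (-(n:ℝ)/2))) t := by
  have heq : Gk n = fun t => -(∫ τ in (9:ℝ)..t, τ ^ (-(n:ℝ)/2)) := by
    funext x; rw [Gk, intervalIntegral.integral_symm]
  rw [heq]
  apply HasDerivAt.neg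
  apply intervalIntegral.integral_hasDerivAt_right
  · exact Gk_integrable (by norm_num) ht
  · exact rpow_contOn.stronglyMeasurableAtFilter isOpen_Ioi t ht
  · exact (Real.continuousAt_rpow_const t _ (Or.inl (ne_of_gt ht)))

lemma Gk_pos (n : ℕ) {t : ℝ} (ht : 0 < t) (ht9 : t < 9) : 0 < Gk n t := by
  apply intervalIntegral.intervalIntegral_pos_of_pos_on (Gk_integrable ht (by norm_num))
  · intro x hx
    exact Real.rpow_pos_of_pos (lt_trans ht hx.1) _
  · exact ht9

lemma Gk_le (n : ℕ) {t : ℝ} (h : 4⁻¹ ≤ t) : Gk n t ≤ Gk n 4⁻¹ := by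
  have h0 : (0:ℝ) < 4⁻¹ := by norm_num
  have ht : (0:ℝ) < t := lt_of_lt_of_le h0 h
  have hsplit := intervalIntegral.integral_add_adjacent_intervals (a := (4⁻¹:ℝ)) (b := t)
    (c := (9:ℝ)) (μ := volume) (f := fun τ : ℝ => τ ^ (-(n:ℝ)/2))
    (Gk_integrable (n := n) h0 ht) (Gk_integrable (n := n) ht (by norm_num))
  have hnn : 0 ≤ ∫ τ in (4⁻¹:ℝ)..t, τ ^ (-(n:ℝ)/2) := by
    apply intervalIntegral.integral_nonneg h
    intro x hx
    exact Real.rpow_nonneg (le_trans h0.le hx.1) _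
  rw [Gk, Gk]
  linarith [hsplit]

/-! ### The radial profile `F` and its derivatives; `p` is `ρ²`. -/

variable (n : ℕ) (p : ℝ)

def F0 (s : ℝ) : ℝ := chi s * Gk n (p+s)
def F1 (s : ℝ) : ℝ := chi1 s * Gk n (p+s) - chi s * (p+s) ^ (-(n:ℝ)/2)
def F2 (s : ℝ) : ℝ := chi2 s * Gk n (p+s) - 2 * chi1 s * (p+s) ^ (-(n:ℝ)/2)
  + chi s * ((n:ℝ)/2) * (p+s) ^ (-(n:ℝ)/2 - 1)

/-- `LF = 4 s F2 + 2 n F1` is the Laplacian profile of `y ↦ F0 (|y-x₀|²)`. -/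
def LF (s : ℝ) : ℝ := 4 * s * F2 n p s + 2 * (n:ℝ) * F1 n p s

variable {p}

lemma hasDerivAt_F0 (hp : 0 < p) {s : ℝ} (hs : 0 ≤ s) :
    HasDerivAt (F0 n p) (F1 n p s) s := by
  have hps : 0 < p + s := by linarith
  have hG : HasDerivAt (fun s : ℝ => Gk n (p+s)) (-(( p+s) ^ (-(n:ℝ)/2))) s := by
    have := (hasDerivAt_Gk n hps).comp s ((hasDerivAt_id s).const_add p)
    simpa [Function.comp_def] using this
  have h := (hasDerivAt_chi s).mul hG
  have heq : F0 n p = fun s => chi s * Gk n (p+s) := by funext x; rw [F0]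
  rw [heq, F1]
  refine h.congr_deriv ?_
  ring

lemma hasDerivAt_F1 (hp : 0 < p) {s : ℝ} (hs : 0 ≤ s) :
    HasDerivAt (F1 n p) (F2 n p s) s := by
  have hps : 0 < p + s := by linarith
  have hG : HasDerivAt (fun s : ℝ => Gk n (p+s)) (-((p+s) ^ (-(n:ℝ)/2))) s := by
    have := (hasDerivAt_Gk n hps).comp s ((hasDerivAt_id s).const_add p)
    simpa [Function.comp_def] using this
  have hpow : HasDerivAt (fun s : ℝ => (p+s) ^ (-(n:ℝ)/2))
      ((-(n:ℝ)/2) * (p+s) ^ (-(n:ℝ)/2 - 1)) s := by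
    have h1 := (Real.hasDerivAt_rpow_const (x := p+s) (p := -(n:ℝ)/2) (Or.inl hps.ne'))
    have := h1.comp s ((hasDerivAt_id s).const_add p)
    simpa [Function.comp_def] using this
  have h := ((hasDerivAt_chi1 s).mul hG).sub ((hasDerivAt_chi s).mul hpow)
  have heq : F1 n p = fun s => chi1 s * Gk n (p+s) - chi s * (p+s) ^ (-(n:ℝ)/2) := by
    funext x; rw [F1]
  rw [heq, F2]
  refine h.congr_deriv ?_
  ring


/-! ### Region estimates for `LF` -/

lemma chi_inner_LF (hp : 0 < p) {s : ℝ} (h0 : 0 ≤ s) (h : s ≤ 4⁻¹) :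
    LF n p s = -(2*(n:ℝ)*p*((p+s) ^ (-(n:ℝ)/2)) / (p+s)) := by
  have hps : 0 < p + s := by linarith
  have hsub : (p+s) ^ (-(n:ℝ)/2 - 1) = (p+s) ^ (-(n:ℝ)/2) / (p+s) :=
    Real.rpow_sub_one hps.ne' _
  rw [LF, F1, F2, chi_eq_one h, chi1_eq_zero h, chi2_eq_zero h, hsub]
  field_simp
  ring

lemma LF_inner_nonpos (hp : 0 < p) {s : ℝ} (h0 : 0 ≤ s) (h : s ≤ 4⁻¹) :
    LF n p s ≤ 0 := by
  rw [chi_inner_LF n hp h0 h]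
  have hps : 0 < p + s := by linarith
  have : 0 ≤ (p+s) ^ (-(n:ℝ)/2) := Real.rpow_nonneg hps.le _
  have hn : (0:ℝ) ≤ (n:ℝ) := Nat.cast_nonneg n
  rw [neg_nonpos]
  positivity

lemma LF_inner_bound (hp : 0 < p) (hp4 : p ≤ 4⁻¹) {s : ℝ} (h0 : 0 ≤ s) (hsp : s ≤ p) :
    (n:ℝ) * (2:ℝ) ^ (-(n:ℝ)/2) * p ^ (-(n:ℝ)/2) ≤ -(LF n p s) := by
  have hps : 0 < p + s := by linarith
  have h2p : p + s ≤ 2*p := by linarith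
  rw [chi_inner_LF n hp h0 (le_trans hsp hp4), neg_neg]
  have hq : -(n:ℝ)/2 ≤ 0 := by
    have : (0:ℝ) ≤ (n:ℝ) := Nat.cast_nonneg n; linarith
  have hA : (2*p : ℝ) ^ (-(n:ℝ)/2) ≤ (p+s) ^ (-(n:ℝ)/2) :=
    Real.rpow_le_rpow_of_nonpos hps h2p hq
  have h2ppos : (0:ℝ) < 2*p := by linarith
  have hmul : ((2:ℝ)*p) ^ (-(n:ℝ)/2) = (2:ℝ) ^ (-(n:ℝ)/2) * p ^ (-(n:ℝ)/2) :=
    Real.mul_rpow (by norm_num) hp.le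
  have hfrac : (1:ℝ)/(2*p) ≤ 1/(p+s) := by
    apply one_div_le_one_div_of_le hps h2p
  have hne : (p+s) ≠ 0 := hps.ne'
  calc (n:ℝ) * (2:ℝ) ^ (-(n:ℝ)/2) * p ^ (-(n:ℝ)/2)
      = 2*(n:ℝ)*p*((2*p) ^ (-(n:ℝ)/2)) * (1/(2*p)) := by
        rw [hmul]; field_simp
    _ ≤ 2*(n:ℝ)*p*((p+s) ^ (-(n:ℝ)/2)) * (1/(p+s)) := by
        apply mul_le_mul
        · apply mul_le_mul_of_nonneg_left hA
          have : (0:ℝ) ≤ (n:ℝ) := Nat.cast_nonneg n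
          positivity
        · exact hfrac
        · positivity
        · have : 0 ≤ (p+s) ^ (-(n:ℝ)/2) := Real.rpow_nonneg hps.le _
          have : (0:ℝ) ≤ (n:ℝ) := Nat.cast_nonneg n
          positivity
    _ = 2*(n:ℝ)*p*((p+s) ^ (-(n:ℝ)/2)) / (p+s) := by field_simp

def Kb : ℝ := Classical.choose chi_deriv_bound
lemma Kb_pos : 0 < Kb := (Classical.choose_spec chi_deriv_bound).1
lemma Kb_bound (s : ℝ) : |chi1 s| ≤ Kb ∧ |chi2 s| ≤ Kb :=
  (Classical.choose_spec chi_deriv_bound).2 s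

def Cmid (n : ℕ) : ℝ :=
  Kb * (2*(n:ℝ)*Gk n 4⁻¹ + 8*((4⁻¹:ℝ) ^ (-(n:ℝ)/2))) + 4*Kb*Gk n 4⁻¹

lemma LF_middle (hp : 0 < p) (hp4 : p ≤ 4⁻¹) {s : ℝ} (h1 : 4⁻¹ ≤ s) (h2 : s ≤ 1) :
    LF n p s ≤ Cmid n := by
  have hps : 0 < p + s := by linarith [show (0:ℝ) < 4⁻¹ by norm_num]
  have hps4 : 4⁻¹ ≤ p + s := by linarith
  have hps9 : p + s < 9 := by linarith [show (4⁻¹:ℝ) ≤ 1 by norm_num]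
  have hGnn : 0 ≤ Gk n (p+s) := (Gk_pos n hps hps9).le
  have hGle : Gk n (p+s) ≤ Gk n 4⁻¹ := Gk_le n hps4
  have hGnn' : 0 ≤ Gk n 4⁻¹ := le_trans hGnn hGle
  have hq : -(n:ℝ)/2 ≤ 0 := by
    have : (0:ℝ) ≤ (n:ℝ) := Nat.cast_nonneg n; linarith
  have hpow_le : (p+s) ^ (-(n:ℝ)/2) ≤ (4⁻¹:ℝ) ^ (-(n:ℝ)/2) :=
    Real.rpow_le_rpow_of_nonpos (by norm_num) hps4 hq
  have hpow_nn : 0 ≤ (p+s) ^ (-(n:ℝ)/2) := Real.rpow_nonneg hps.le _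
  have hsub : (p+s) ^ (-(n:ℝ)/2 - 1) = (p+s) ^ (-(n:ℝ)/2) / (p+s) :=
    Real.rpow_sub_one hps.ne' _
  have hdecomp : LF n p s =
      chi s * (2*(n:ℝ)*s*((p+s) ^ (-(n:ℝ)/2))/(p+s) - 2*(n:ℝ)*((p+s) ^ (-(n:ℝ)/2)))
      + chi1 s * (2*(n:ℝ)*Gk n (p+s) - 8*s*((p+s) ^ (-(n:ℝ)/2)))
      + 4*s*(chi2 s * Gk n (p+s)) := by
    rw [LF, F1, F2, hsub]; field_simp; ring
  have hterm1 : chi s * (2*(n:ℝ)*s*((p+s) ^ (-(n:ℝ)/2))/(p+s) - 2*(n:ℝ)*((p+s) ^ (-(n:ℝ)/2)))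
      ≤ 0 := by
    apply mul_nonpos_of_nonneg_of_nonpos (chi_nonneg s)
    have key : 2*(n:ℝ)*s*((p+s) ^ (-(n:ℝ)/2))/(p+s) ≤ 2*(n:ℝ)*((p+s) ^ (-(n:ℝ)/2)) := by
      rw [div_le_iff₀ hps]
      have hn : (0:ℝ) ≤ (n:ℝ) := Nat.cast_nonneg n
      nlinarith [mul_nonneg (mul_nonneg hn hpow_nn) hp.le]
    linarith
  have hK1 := (Kb_bound s).1
  have hK2 := (Kb_bound s).2
  have habs1 : chi1 s * (2*(n:ℝ)*Gk n (p+s) - 8*s*((p+s) ^ (-(n:ℝ)/2)))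
      ≤ Kb * (2*(n:ℝ)*Gk n 4⁻¹ + 8*((4⁻¹:ℝ) ^ (-(n:ℝ)/2))) := by
    have h1' : chi1 s * (2*(n:ℝ)*Gk n (p+s) - 8*s*((p+s) ^ (-(n:ℝ)/2)))
        ≤ |chi1 s| * |2*(n:ℝ)*Gk n (p+s) - 8*s*((p+s) ^ (-(n:ℝ)/2))| := by
      rw [← abs_mul]; exact le_abs_self _
    have h2' : |2*(n:ℝ)*Gk n (p+s) - 8*s*((p+s) ^ (-(n:ℝ)/2))|
        ≤ 2*(n:ℝ)*Gk n 4⁻¹ + 8*((4⁻¹:ℝ) ^ (-(n:ℝ)/2)) := by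
      have hn : (0:ℝ) ≤ (n:ℝ) := Nat.cast_nonneg n
      rw [abs_sub_le_iff]
      constructor
      · have e1 : 2*(n:ℝ)*Gk n (p+s) ≤ 2*(n:ℝ)*Gk n 4⁻¹ := by nlinarith
        have e2 : 0 ≤ 8*s*((p+s) ^ (-(n:ℝ)/2)) := by positivity
        have e3 : 0 ≤ 8*((4⁻¹:ℝ) ^ (-(n:ℝ)/2)) := by positivity
        linarith
      · have e1 : 8*s*((p+s) ^ (-(n:ℝ)/2)) ≤ 8*((4⁻¹:ℝ) ^ (-(n:ℝ)/2)) := by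
          have : s*((p+s) ^ (-(n:ℝ)/2)) ≤ 1*((4⁻¹:ℝ) ^ (-(n:ℝ)/2)) := by
            apply mul_le_mul h2 hpow_le hpow_nn; norm_num
          linarith
        have e2 : 0 ≤ 2*(n:ℝ)*Gk n (p+s) := by positivity
        have e3 : 0 ≤ 2*(n:ℝ)*Gk n 4⁻¹ := by positivity
        linarith
    calc chi1 s * (2*(n:ℝ)*Gk n (p+s) - 8*s*((p+s) ^ (-(n:ℝ)/2)))
        ≤ |chi1 s| * |2*(n:ℝ)*Gk n (p+s) - 8*s*((p+s) ^ (-(n:ℝ)/2))| := h1'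
      _ ≤ Kb * (2*(n:ℝ)*Gk n 4⁻¹ + 8*((4⁻¹:ℝ) ^ (-(n:ℝ)/2))) := by
          apply mul_le_mul hK1 h2' (abs_nonneg _) Kb_pos.le
  have habs2 : 4*s*(chi2 s * Gk n (p+s)) ≤ 4*Kb*Gk n 4⁻¹ := by
    have : chi2 s * Gk n (p+s) ≤ Kb * Gk n 4⁻¹ := by
      calc chi2 s * Gk n (p+s) ≤ |chi2 s| * Gk n (p+s) := by
            apply mul_le_mul_of_nonneg_right (le_abs_self _) hGnn
        _ ≤ Kb * Gk n 4⁻¹ := mul_le_mul hK2 hGle hGnn Kb_pos.le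
    have hs0 : 0 ≤ s := by linarith [show (0:ℝ) ≤ 4⁻¹ by norm_num]
    have h4s : 4*s ≤ 4 := by linarith
    have hKG : 0 ≤ Kb * Gk n 4⁻¹ := mul_nonneg Kb_pos.le hGnn'
    calc 4*s*(chi2 s * Gk n (p+s)) ≤ 4*s*(Kb * Gk n 4⁻¹) := by
          apply mul_le_mul_of_nonneg_left this (by positivity)
      _ ≤ 4*(Kb * Gk n 4⁻¹) := by nlinarith
      _ = 4*Kb*Gk n 4⁻¹ := by ring
  rw [hdecomp, Cmid]
  linarith

lemma F0_outer {s : ℝ} (h : 1 ≤ s) : F0 n p s = 0 := by rw [F0, chi_eq_zero h]; ring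
lemma F1_outer {s : ℝ} (h : 1 ≤ s) : F1 n p s = 0 := by
  rw [F1, chi_eq_zero h, chi1_eq_zero' h]; ring
lemma LF_outer {s : ℝ} (h : 1 ≤ s) : LF n p s = 0 := by
  rw [LF, F1, F2, chi_eq_zero h, chi1_eq_zero' h, chi2_eq_zero' h]; ring

lemma F0_nonneg (hp : 0 < p) (hp4 : p ≤ 4⁻¹) {s : ℝ} (h0 : 0 ≤ s) : 0 ≤ F0 n p s := by
  rcases le_or_gt s 1 with h | h
  · rw [F0]
    apply mul_nonneg (chi_nonneg s)
    exact (Gk_pos n (by linarith) (by linarith [show (4⁻¹:ℝ) ≤ 1 by norm_num])).le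
  · rw [F0_outer n h.le]

lemma LF_glob (hp : 0 < p) (hp4 : p ≤ 4⁻¹) {s : ℝ} (h0 : 0 ≤ s) :
    LF n p s ≤ max (Cmid n) 0 := by
  rcases le_or_gt s 4⁻¹ with h | h
  · exact le_trans (LF_inner_nonpos n hp h0 h) (le_max_right _ _)
  rcases le_or_gt s 1 with h1 | h1
  · exact le_trans (LF_middle n hp hp4 h.le h1) (le_max_left _ _)
  · rw [LF_outer n h1.le]; exact le_max_right _ _

lemma contAt_Gkc (hp : 0 < p) {s : ℝ} (hs : 0 ≤ s) :
    ContinuousAt (fun s : ℝ => Gk n (p+s)) s := by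
  have : ContinuousAt (Gk n) (p+s) := (hasDerivAt_Gk n (by linarith)).continuousAt
  exact this.comp (by fun_prop)

lemma contAt_rpowc (c : ℝ) (hp : 0 < p) {s : ℝ} (hs : 0 ≤ s) :
    ContinuousAt (fun s : ℝ => (p+s) ^ c) s := by
  have : ContinuousAt (fun t : ℝ => t ^ c) (p+s) :=
    Real.continuousAt_rpow_const _ _ (Or.inl (by positivity))
  exact this.comp (by fun_prop)

lemma contAt_LF (hp : 0 < p) {s : ℝ} (hs : 0 ≤ s) : ContinuousAt (LF n p) s := by
  have c1 : ContinuousAt (F1 n p) s := (hasDerivAt_F1 n hp hs).continuousAt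
  have c2 : ContinuousAt (F2 n p) s := by
    rw [show F2 n p = fun s => chi2 s * Gk n (p+s) - 2 * chi1 s * (p+s) ^ (-(n:ℝ)/2)
      + chi s * ((n:ℝ)/2) * (p+s) ^ (-(n:ℝ)/2 - 1) from funext fun _ => rfl]
    exact ((cont_chi2.continuousAt.mul (contAt_Gkc n hp hs)).sub
      ((continuous_const.continuousAt.mul cont_chi1.continuousAt).mul
        (contAt_rpowc (-(n:ℝ)/2) hp hs))).add
      ((cont_chi.continuousAt.mul continuous_const.continuousAt).mul (contAt_rpowc (-(n:ℝ)/2 - 1) hp hs))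
  rw [show LF n p = fun s => 4 * s * F2 n p s + 2 * (n:ℝ) * F1 n p s from funext fun _ => rfl]
  exact ((continuous_const.continuousAt.mul continuous_id.continuousAt).mul c2).add
    (continuous_const.continuousAt.mul c1)

lemma contAt_F0 (hp : 0 < p) {s : ℝ} (hs : 0 ≤ s) : ContinuousAt (F0 n p) s :=
  (hasDerivAt_F0 n hp hs).continuousAt



lemma esymm_one (n : ℕ) (lam : Fin n → ℝ) : esymm n 1 lam = ∑ i, lam i := by
  rw [esymm, Finset.powersetCard_one, Finset.sum_map]
  simp

lemma herm_trace {n : ℕ} {M : Matrix (Fin n) (Fin n) ℝ} (h : M.IsHermitian) :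
    ∑ i, h.eigenvalues i = M.trace := by
  rw [h.trace_eq_sum_eigenvalues]
  simp

lemma pd_pd_eq {n : ℕ} (u : E n → ℝ) {x : E n} (hu : ContDiffAt ℝ 2 u x) (i j : Fin n) :
    pd (fun y => pd u j y) i x =
      fderiv ℝ (fderiv ℝ u) x (EuclideanSpace.single i 1) (EuclideanSpace.single j 1) := by
  have hdf : DifferentiableAt ℝ (fderiv ℝ u) x := by
    have h1 : ContDiffAt ℝ 1 (fderiv ℝ u) x := hu.fderiv_right (by norm_num)
    exact h1.differentiableAt one_ne_zero
  set c : (E n →L[ℝ] ℝ) →L[ℝ] ℝ :=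
    ContinuousLinearMap.apply ℝ ℝ (EuclideanSpace.single j (1:ℝ)) with hc
  have hcomp : (fun y => pd u j y) = fun y => c (fderiv ℝ u y) := rfl
  have h2 := (c.hasFDerivAt.comp x hdf.hasFDerivAt).fderiv
  rw [Function.comp_def] at h2
  rw [pd, hcomp, h2]
  rfl

/-- differentiability of `pd u j`. -/
lemma pd_diff {n : ℕ} (u : E n → ℝ) {x : E n} (hu : ContDiffAt ℝ 2 u x) (j : Fin n) :
    HasFDerivAt (fun y => pd u j y)
      ((ContinuousLinearMap.apply ℝ ℝ (EuclideanSpace.single j (1:ℝ))).comp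
        (fderiv ℝ (fderiv ℝ u) x)) x := by
  have hdf : DifferentiableAt ℝ (fderiv ℝ u) x := by
    have h1 : ContDiffAt ℝ 1 (fderiv ℝ u) x := hu.fderiv_right (by norm_num)
    exact h1.differentiableAt one_ne_zero
  exact (ContinuousLinearMap.apply ℝ ℝ
    (EuclideanSpace.single j (1:ℝ))).hasFDerivAt.comp x hdf.hasFDerivAt

/-- From the Γ_k hypothesis: the Laplacian is nonnegative. -/
lemma lap_nonneg {n k : ℕ} (hk : 1 ≤ k) (u : E n → ℝ) {x : E n}
    (hu : ContDiffAt ℝ 2 u x) (hx : 0 < u x) (hg : eigs (Amat u x) ∈ GammaK n k) :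
    0 ≤ ∑ i, fderiv ℝ (fderiv ℝ u) x (EuclideanSpace.single i 1) (EuclideanSpace.single i 1)
      := by
  -- the matrix `Amat u x` is Hermitian
  have hsym := hu.isSymmSndFDerivAt (by simp)
  have hrep : ∀ i j : Fin n, hess u x i j =
      fderiv ℝ (fderiv ℝ u) x (EuclideanSpace.single i 1) (EuclideanSpace.single j 1) :=
    fun i j => pd_pd_eq u hu i j
  have hhess_symm : ∀ i j : Fin n, hess u x i j = hess u x j i := by
    intro i j; rw [hrep, hrep]; exact hsym _ _
  have hherm : (Amat u x).IsHermitian := by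
    rw [Matrix.IsHermitian]
    ext i j
    rw [Matrix.conjTranspose_apply]
    rw [show star ((Amat u x) j i) = (Amat u x) j i from star_trivial _]
    rw [Amat, Matrix.of_apply, Matrix.of_apply, hhess_symm j i]
    congr 1
    rw [show (if j = i then (1:ℝ) else 0) = (if i = j then (1:ℝ) else 0) by simp [eq_comm]]
  -- σ₁ of the eigenvalues is the trace
  have h1 := hg 1 le_rfl hk
  rw [esymm_one] at h1
  have heig : eigs (Amat u x) = hherm.eigenvalues := dif_pos hherm
  rw [heig, herm_trace hherm] at h1
  -- compute the trace
  have htr : (Amat u x).trace = u x * (∑ i, fderiv ℝ (fderiv ℝ u) x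
      (EuclideanSpace.single i 1) (EuclideanSpace.single i 1)) - ((n:ℝ)/2) * gradsq u x := by
    rw [Matrix.trace]
    have : ∀ i : Fin n, (Amat u x).diag i = u x * fderiv ℝ (fderiv ℝ u) x
        (EuclideanSpace.single i 1) (EuclideanSpace.single i 1) - (1/2) * gradsq u x := by
      intro i
      rw [Matrix.diag, Amat, Matrix.of_apply, hrep i i, if_pos rfl, mul_one]
    rw [Finset.sum_congr rfl (fun i _ => this i), Finset.sum_sub_distrib,
      ← Finset.mul_sum, Finset.sum_const]
    simp only [Finset.card_univ, Fintype.card_fin, nsmul_eq_mul]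
    ring
  rw [htr] at h1
  have hgs : 0 ≤ gradsq u x := by
    rw [gradsq]; positivity
  have hn2 : 0 ≤ ((n:ℝ)/2) * gradsq u x := by positivity
  nlinarith


/-! ### Geometry on Euclidean space -/

variable {n : ℕ}

def Sq (x₀ : E n) (y : E n) : ℝ := ∑ i, (y i - x₀ i)^2

lemma Sq_nonneg (x₀ y : E n) : 0 ≤ Sq x₀ y := by
  rw [Sq]; positivity

lemma cont_Sq (x₀ : E n) : Continuous (Sq x₀) := by
  apply continuous_finset_sum
  intro i _
  exact (((EuclideanSpace.proj (𝕜 := ℝ) i).continuous).sub continuous_const).pow 2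

lemma Sq_eq_dist (x₀ y : E n) : Sq x₀ y = dist y x₀ ^ 2 := by
  rw [EuclideanSpace.dist_eq, Real.sq_sqrt (by positivity)]
  rw [Sq]
  congr 1; funext i
  rw [Real.dist_eq, sq_abs]

def SD (x₀ : E n) (y : E n) : E n →L[ℝ] ℝ :=
  ∑ i, (2*(y i - x₀ i)) • (EuclideanSpace.proj (𝕜 := ℝ) i)

lemma SD_apply (x₀ y : E n) (j : Fin n) :
    SD x₀ y (EuclideanSpace.single j 1) = 2*(y j - x₀ j) := by
  rw [SD, ContinuousLinearMap.sum_apply]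
  have : ∀ i : Fin n, ((2*(y i - x₀ i)) • (EuclideanSpace.proj (𝕜 := ℝ) i))
      (EuclideanSpace.single j 1) = if i = j then 2*(y j - x₀ j) else 0 := by
    intro i
    rw [ContinuousLinearMap.smul_apply,
      show (EuclideanSpace.proj (𝕜 := ℝ) i) (EuclideanSpace.single j (1:ℝ))
        = (EuclideanSpace.single j (1:ℝ)) i from rfl,
      EuclideanSpace.single_apply]
    by_cases h : i = j
    · subst h; simp
    · simp [h]
  rw [Finset.sum_congr rfl (fun i _ => this i)]
  simp

lemma hasFDerivAt_Sq (x₀ y : E n) : HasFDerivAt (Sq x₀) (SD x₀ y) y := by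
  have h : ∀ i : Fin n, HasFDerivAt (fun y : E n => (y i - x₀ i)^2)
      ((2*(y i - x₀ i)) • (EuclideanSpace.proj (𝕜 := ℝ) i)) y := by
    intro i
    have h1 : HasFDerivAt (fun y : E n => y i - x₀ i)
        (EuclideanSpace.proj (𝕜 := ℝ) i) y :=
      (EuclideanSpace.proj (𝕜 := ℝ) i).hasFDerivAt.sub_const (x₀ i)
    have h2 := h1.mul h1
    have heq : (fun y : E n => (y i - x₀ i)^2) = fun y => (y i - x₀ i) * (y i - x₀ i) := by
      funext z; ring
    rw [heq]
    refine h2.congr_fderiv ?_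
    rw [two_mul, add_smul]
  exact HasFDerivAt.fun_sum (fun i _ => h i)

lemma coord_le_norm (x : E n) (i : Fin n) : |x i| ≤ ‖x‖ := by
  rw [EuclideanSpace.norm_eq]
  rw [show |x i| = Real.sqrt ((x i)^2) by rw [Real.sqrt_sq_eq_abs]]
  apply Real.sqrt_le_sqrt
  have := Finset.single_le_sum (f := fun j => ‖x j‖^2)
    (fun j _ => by positivity) (Finset.mem_univ i)
  simpa [Real.norm_eq_abs, sq_abs] using this

lemma Sq_big {x₀ y : E n} (hx₀ : dist x₀ (0 : E n) < 1) {i : Fin n}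
    (hyi : 4 ≤ |y i|) : 1 < Sq x₀ y := by
  have hx : |x₀ i| ≤ 1 := by
    have h1 := coord_le_norm x₀ i
    have : ‖x₀‖ = dist x₀ 0 := by rw [dist_zero_right]
    linarith
  have habs : 3 ≤ |y i - x₀ i| := by
    have := abs_sub_abs_le_abs_sub (y i) (x₀ i)
    linarith
  have hsq : 9 ≤ (y i - x₀ i)^2 := by
    nlinarith [abs_nonneg (y i - x₀ i), sq_abs (y i - x₀ i)]
  have : (y i - x₀ i)^2 ≤ Sq x₀ y := by
    rw [Sq]
    exact Finset.single_le_sum (f := fun j => (y j - x₀ j)^2)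
      (fun j _ => by positivity) (Finset.mem_univ i)
  linarith

/-! ### The vector field and its divergence -/

variable (u : E n → ℝ) (x₀ : E n) (p : ℝ)

def phiF (y : E n) : ℝ := F0 n p (Sq x₀ y)
def Pg (i : Fin n) (y : E n) : ℝ := F1 n p (Sq x₀ y) * (2*(y i - x₀ i))
def Vv (i : Fin n) (y : E n) : ℝ :=
  if dist y (0:E n) < 3 then u y * Pg x₀ p i y - phiF x₀ p y * pd u i y else 0
def lap (y : E n) : ℝ :=
  ∑ i, fderiv ℝ (fderiv ℝ u) y (EuclideanSpace.single i 1) (EuclideanSpace.single i 1)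
def divv (y : E n) : ℝ :=
  if dist y (0:E n) < 3 then u y * LF n p (Sq x₀ y) - phiF x₀ p y * lap u y else 0

variable {u x₀ p}

lemma Vv_zero {y : E n} (h : 1 < Sq x₀ y) (i : Fin n) : Vv u x₀ p i y = 0 := by
  rw [Vv]
  split
  · rw [Pg, phiF, F1_outer n h.le, F0_outer n h.le]; ring
  · rfl

lemma divv_zero {y : E n} (h : 1 < Sq x₀ y) : divv u x₀ p y = 0 := by
  rw [divv]
  split
  · rw [phiF, LF_outer n h.le, F0_outer n h.le]; ring
  · rfl

lemma cover (hx₀ : dist x₀ (0:E n) < 1) (y : E n) :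
    dist y (0:E n) < 3 ∨ 1 < Sq x₀ y := by
  rcases lt_or_ge (dist y (0:E n)) 3 with h | h
  · exact Or.inl h
  · right
    have : 2 ≤ dist y x₀ := by
      have := dist_triangle y x₀ (0 : E n)
      have h2 : dist x₀ (0:E n) < 1 := hx₀
      linarith
    rw [Sq_eq_dist]
    nlinarith [dist_nonneg (x := y) (y := x₀)]

lemma open_outer (x₀ : E n) : IsOpen {z : E n | 1 < Sq x₀ z} :=
  isOpen_Ioi.preimage (cont_Sq x₀)

lemma exists_deriv (hu : ContDiffOn ℝ 2 u (Metric.ball (0:E n) 3))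
    (hx₀ : dist x₀ (0:E n) < 1) (hp : 0 < p) (y : E n) :
    ∃ D : Fin n → (E n →L[ℝ] ℝ),
      (∀ i, HasFDerivAt (Vv u x₀ p i) (D i) y) ∧
      (∑ i, D i (EuclideanSpace.single i 1)) = divv u x₀ p y := by
  rcases cover hx₀ y with hy | hy
  · -- interior case
    have hy3 : y ∈ Metric.ball (0:E n) 3 := by rwa [Metric.mem_ball]
    have hu2 : ContDiffAt ℝ 2 u y := hu.contDiffAt (Metric.isOpen_ball.mem_nhds hy3)
    have hSq0 : 0 ≤ Sq x₀ y := Sq_nonneg x₀ y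
    have hS := hasFDerivAt_Sq x₀ y
    have hphi : HasFDerivAt (phiF x₀ p) (F1 n p (Sq x₀ y) • SD x₀ y) y :=
      (hasDerivAt_F0 n hp hSq0).comp_hasFDerivAt y hS
    have hF1S : HasFDerivAt (fun z => F1 n p (Sq x₀ z)) (F2 n p (Sq x₀ y) • SD x₀ y) y :=
      (hasDerivAt_F1 n hp hSq0).comp_hasFDerivAt y hS
    have hlin : ∀ i : Fin n, HasFDerivAt (fun z : E n => 2*(z i - x₀ i))
        ((2:ℝ) • EuclideanSpace.proj (𝕜:=ℝ) i) y := fun i =>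
      ((EuclideanSpace.proj (𝕜:=ℝ) i).hasFDerivAt.sub_const (x₀ i)).const_mul 2
    have hPg : ∀ i : Fin n, HasFDerivAt (Pg x₀ p i)
        ((F1 n p (Sq x₀ y)) • ((2:ℝ) • EuclideanSpace.proj (𝕜:=ℝ) i)
          + (2*(y i - x₀ i)) • (F2 n p (Sq x₀ y) • SD x₀ y)) y := fun i =>
      hF1S.mul (hlin i)
    have hud : HasFDerivAt u (fderiv ℝ u y) y :=
      (hu2.differentiableAt (by norm_num)).hasFDerivAt
    have hpd : ∀ i, HasFDerivAt (fun z => pd u i z)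
        ((ContinuousLinearMap.apply ℝ ℝ (EuclideanSpace.single i (1:ℝ))).comp
          (fderiv ℝ (fderiv ℝ u) y)) y := fun i => pd_diff u hu2 i
    set H := fderiv ℝ (fderiv ℝ u) y with hH
    set D : Fin n → (E n →L[ℝ] ℝ) := fun i =>
      (u y • ((F1 n p (Sq x₀ y)) • ((2:ℝ) • EuclideanSpace.proj (𝕜:=ℝ) i)
          + (2*(y i - x₀ i)) • (F2 n p (Sq x₀ y) • SD x₀ y))
        + Pg x₀ p i y • fderiv ℝ u y)
      - (phiF x₀ p y • ((ContinuousLinearMap.apply ℝ ℝ (EuclideanSpace.single i (1:ℝ))).comp H)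
        + pd u i y • (F1 n p (Sq x₀ y) • SD x₀ y)) with hDdef
    have hVe : ∀ i, HasFDerivAt (Vv u x₀ p i) (D i) y := by
      intro i
      have hexpr : HasFDerivAt (fun z => u z * Pg x₀ p i z - phiF x₀ p z * pd u i z) (D i) y :=
        (hud.mul (hPg i)).sub (hphi.mul (hpd i))
      apply hexpr.congr_of_eventuallyEq
      filter_upwards [Metric.isOpen_ball.mem_nhds hy3] with z hz
      rw [Vv, if_pos (Metric.mem_ball.mp hz)]
    refine ⟨D, hVe, ?_⟩
    have hproj : ∀ i : Fin n, (EuclideanSpace.proj (𝕜:=ℝ) i)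
        (EuclideanSpace.single i (1:ℝ)) = 1 := by
      intro i
      rw [show (EuclideanSpace.proj (𝕜:=ℝ) i) (EuclideanSpace.single i (1:ℝ))
        = (EuclideanSpace.single i (1:ℝ)) i from rfl, EuclideanSpace.single_apply, if_pos rfl]
    have hDi : ∀ i : Fin n, D i (EuclideanSpace.single i 1) =
        u y * (2 * F1 n p (Sq x₀ y) + 4 * F2 n p (Sq x₀ y) * (y i - x₀ i)^2)
          - phiF x₀ p y * (H (EuclideanSpace.single i 1) (EuclideanSpace.single i 1)) := by
      intro i
      rw [hDdef]
      simp only [ContinuousLinearMap.sub_apply, ContinuousLinearMap.add_apply,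
        ContinuousLinearMap.smul_apply, ContinuousLinearMap.coe_comp', Function.comp_apply,
        ContinuousLinearMap.apply_apply, smul_eq_mul, SD_apply, hproj]
      have hfd : (fderiv ℝ u y) (EuclideanSpace.single i (1:ℝ)) = pd u i y := rfl
      rw [hfd, Pg]
      ring
    rw [Finset.sum_congr rfl (fun i _ => hDi i), divv, if_pos hy, Finset.sum_sub_distrib,
      ← Finset.mul_sum, ← Finset.mul_sum, lap, ← hH]
    congr 1
    rw [Finset.sum_add_distrib, Finset.sum_const, ← Finset.mul_sum]
    simp only [Finset.card_univ, Fintype.card_fin, nsmul_eq_mul]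
    rw [LF, show (∑ i, (y i - x₀ i)^2) = Sq x₀ y from rfl]
    ring
  · -- outer case
    refine ⟨fun _ => 0, fun i => ?_, ?_⟩
    · apply (hasFDerivAt_const (0:ℝ) y).congr_of_eventuallyEq
      filter_upwards [(open_outer x₀).mem_nhds hy] with z hz
      exact Vv_zero hz i
    · rw [divv_zero hy]
      simp

lemma contAt_pd {y : E n} (hu2 : ContDiffAt ℝ 2 u y) (i : Fin n) :
    ContinuousAt (fun z => pd u i z) y := (pd_diff u hu2 i).continuousAt

lemma cont_Vv (hu : ContDiffOn ℝ 2 u (Metric.ball (0:E n) 3))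
    (hx₀ : dist x₀ (0:E n) < 1) (hp : 0 < p) (i : Fin n) :
    Continuous (Vv u x₀ p i) := by
  rw [continuous_iff_continuousAt]
  intro y
  rcases cover hx₀ y with hy | hy
  · have hy3 : y ∈ Metric.ball (0:E n) 3 := by rwa [Metric.mem_ball]
    have hu2 : ContDiffAt ℝ 2 u y := hu.contDiffAt (Metric.isOpen_ball.mem_nhds hy3)
    have hexpr : ContinuousAt (fun z => u z * Pg x₀ p i z - phiF x₀ p z * pd u i z) y := by
      have hSq : ContinuousAt (Sq x₀) y := (cont_Sq x₀).continuousAt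
      have hc1 : ContinuousAt (fun z => Pg x₀ p i z) y := by
        apply ContinuousAt.mul
        · exact ((hasDerivAt_F1 n hp (Sq_nonneg x₀ y)).continuousAt).comp hSq
        · exact (continuous_const.mul
            (((EuclideanSpace.proj (𝕜:=ℝ) i).continuous).sub continuous_const)).continuousAt
      have hc2 : ContinuousAt (phiF x₀ p) y :=
        ((contAt_F0 n hp (Sq_nonneg x₀ y))).comp hSq
      exact (hu2.continuousAt.mul hc1).sub (hc2.mul (contAt_pd hu2 i))
    apply hexpr.congr
    filter_upwards [Metric.isOpen_ball.mem_nhds hy3] with z hz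
    rw [Vv, if_pos (Metric.mem_ball.mp hz)]
  · apply continuousAt_const.congr
    filter_upwards [(open_outer x₀).mem_nhds hy] with z hz
    exact (Vv_zero hz i).symm

lemma contOn_lap (hu : ContDiffOn ℝ 2 u (Metric.ball (0:E n) 3)) :
    ContinuousOn (lap u) (Metric.ball (0:E n) 3) := by
  have hf1 : ContDiffOn ℝ 1 (fderiv ℝ u) (Metric.ball (0:E n) 3) :=
    hu.fderiv_of_isOpen Metric.isOpen_ball (by norm_num)
  have hf2 : ContinuousOn (fun z => fderiv ℝ (fderiv ℝ u) z) (Metric.ball (0:E n) 3) :=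
    hf1.continuousOn_fderiv_of_isOpen Metric.isOpen_ball (le_refl 1)
  apply continuousOn_finset_sum
  intro i _
  exact (hf2.clm_apply continuousOn_const).clm_apply continuousOn_const

lemma cont_divv (hu : ContDiffOn ℝ 2 u (Metric.ball (0:E n) 3))
    (hx₀ : dist x₀ (0:E n) < 1) (hp : 0 < p) :
    Continuous (divv u x₀ p) := by
  rw [continuous_iff_continuousAt]
  intro y
  rcases cover hx₀ y with hy | hy
  · have hy3 : y ∈ Metric.ball (0:E n) 3 := by rwa [Metric.mem_ball]
    have hu2 : ContDiffAt ℝ 2 u y := hu.contDiffAt (Metric.isOpen_ball.mem_nhds hy3)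
    have hSq : ContinuousAt (Sq x₀) y := (cont_Sq x₀).continuousAt
    have hexpr : ContinuousAt (fun z => u z * LF n p (Sq x₀ z) - phiF x₀ p z * lap u z) y := by
      have hc1 : ContinuousAt (fun z => LF n p (Sq x₀ z)) y :=
        (contAt_LF n hp (Sq_nonneg x₀ y)).comp hSq
      have hc2 : ContinuousAt (phiF x₀ p) y :=
        (contAt_F0 n hp (Sq_nonneg x₀ y)).comp hSq
      have hc3 : ContinuousAt (lap u) y :=
        (contOn_lap hu).continuousAt (Metric.isOpen_ball.mem_nhds hy3)
      exact (hu2.continuousAt.mul hc1).sub (hc2.mul hc3)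
    apply hexpr.congr
    filter_upwards [Metric.isOpen_ball.mem_nhds hy3] with z hz
    rw [divv, if_pos (Metric.mem_ball.mp hz)]
  · apply continuousAt_const.congr
    filter_upwards [(open_outer x₀).mem_nhds hy] with z hz
    exact (divv_zero hz).symm

lemma ecl_symm_coord {m : ℕ} (x : Fin (m+1) → ℝ) (i : Fin (m+1)) :
    ((EuclideanSpace.equiv (Fin (m+1)) ℝ).symm x : E (m+1)) i = x i := by
  simp [EuclideanSpace.equiv]

/-! ### The divergence theorem: `∫ divv = 0` -/

lemma integral_divv_zero {m : ℕ} {u : E (m+1) → ℝ} {x₀ : E (m+1)} {p : ℝ}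
    (hu : ContDiffOn ℝ 2 u (Metric.ball (0:E (m+1)) 3))
    (hx₀ : dist x₀ (0:E (m+1)) < 1) (hp : 0 < p) :
    ∫ y, divv u x₀ p y = 0 := by
  classical
  set em := (MeasurableEquiv.toLp 2 (Fin (m+1) → ℝ)).symm with hem
  set ecl := EuclideanSpace.equiv (Fin (m+1)) ℝ with hecl
  choose D hD1 hD2 using exists_deriv hu hx₀ hp
  set f : Fin (m+1) → (Fin (m+1) → ℝ) → ℝ := fun i x => Vv u x₀ p i (ecl.symm x) with hf
  set f' : Fin (m+1) → (Fin (m+1) → ℝ) → (Fin (m+1) → ℝ) →L[ℝ] ℝ :=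
    fun i x => (D (ecl.symm x) i).comp
      (ecl.symm : (Fin (m+1) → ℝ) →L[ℝ] E (m+1)) with hf'
  have hsingle : ∀ i : Fin (m+1),
      (ecl.symm : (Fin (m+1) → ℝ) →L[ℝ] E (m+1)) (Pi.single i 1)
        = EuclideanSpace.single i (1:ℝ) := fun i => rfl
  have key : ∀ x : Fin (m+1) → ℝ,
      ∑ i, f' i x (Pi.single i 1) = divv u x₀ p (ecl.symm x) := by
    intro x
    have he : ∀ i : Fin (m+1), f' i x (Pi.single i 1)
        = D (ecl.symm x) i (EuclideanSpace.single i 1) := by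
      intro i
      rw [hf', ContinuousLinearMap.comp_apply, hsingle]
    rw [Finset.sum_congr rfl (fun i _ => he i), hD2]
  have hle : (fun _ : Fin (m+1) => (-4:ℝ)) ≤ (fun _ => (4:ℝ)) := fun i => by norm_num
  have hdiv := MeasureTheory.integral_divergence_of_hasFDerivAt_off_countable'
    (fun _ : Fin (m+1) => (-4:ℝ)) (fun _ => (4:ℝ)) hle f f' ∅ Set.countable_empty
    (fun i => ((cont_Vv hu hx₀ hp i).comp ecl.symm.continuous).continuousOn)
    (fun x _ i => (hD1 (ecl.symm x) i).comp x ecl.symm.hasFDerivAt)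
    (by
      rw [MeasureTheory.integrableOn_congr_fun (fun x _ => key x) measurableSet_Icc]
      exact ContinuousOn.integrableOn_compact isCompact_Icc
        ((cont_divv hu hx₀ hp).comp ecl.symm.continuous).continuousOn)
  -- all face integrals vanish
  have hface : ∀ (i : Fin (m+1)) (c : ℝ), |c| = 4 → ∀ x : Fin m → ℝ,
      f i (i.insertNth c x) = 0 := by
    intro i c hc x
    apply Vv_zero
    apply Sq_big hx₀ (i := i)
    have hcoord : (ecl.symm (i.insertNth c x) : E (m+1)) i = c := by
      rw [hecl, ecl_symm_coord]
      simp
    rw [hcoord, hc]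
  rw [Finset.sum_eq_zero] at hdiv
  swap
  · intro i _
    rw [show (∫ x in Set.Icc ((fun _ : Fin (m+1) => (-4:ℝ)) ∘ i.succAbove)
          ((fun _ : Fin (m+1) => (4:ℝ)) ∘ i.succAbove), f i (i.insertNth 4 x)) = 0 from by
        rw [show (fun x : Fin m → ℝ => f i (i.insertNth 4 x)) = fun _ => (0:ℝ) from
          funext fun x => hface i 4 (by norm_num) x]
        simp,
      show (∫ x in Set.Icc ((fun _ : Fin (m+1) => (-4:ℝ)) ∘ i.succAbove)
          ((fun _ : Fin (m+1) => (4:ℝ)) ∘ i.succAbove), f i (i.insertNth (-4) x)) = 0 from by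
        rw [show (fun x : Fin m → ℝ => f i (i.insertNth (-4) x)) = fun _ => (0:ℝ) from
          funext fun x => hface i (-4) (by norm_num) x]
        simp]
    ring
  -- now `∫ x in Icc, ∑ f' = 0`
  have hIcc : (∫ x in Set.Icc (fun _ : Fin (m+1) => (-4:ℝ)) (fun _ => (4:ℝ)),
      divv u x₀ p (ecl.symm x)) = 0 := by
    rw [← MeasureTheory.setIntegral_congr_fun measurableSet_Icc (fun x _ => (key x))]
    exact hdiv
  have hfull : (∫ x : Fin (m+1) → ℝ, divv u x₀ p (ecl.symm x)) = 0 := by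
    rw [← MeasureTheory.setIntegral_eq_integral_of_forall_compl_eq_zero
      (s := Set.Icc (fun _ : Fin (m+1) => (-4:ℝ)) (fun _ => (4:ℝ)))]
    · exact hIcc
    · intro x hx
      rw [Set.mem_Icc] at hx
      rcases not_and_or.mp hx with h | h
      · rw [Pi.le_def] at h
        push_neg at h
        obtain ⟨i, hi⟩ := h
        apply divv_zero
        apply Sq_big hx₀ (i := i)
        have hcoord : (ecl.symm x : E (m+1)) i = x i := by rw [hecl, ecl_symm_coord]
        rw [hcoord]
        exact le_abs.mpr (Or.inr (by linarith))
      · rw [Pi.le_def] at h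
        push_neg at h
        obtain ⟨i, hi⟩ := h
        apply divv_zero
        apply Sq_big hx₀ (i := i)
        have hcoord : (ecl.symm x : E (m+1)) i = x i := by rw [hecl, ecl_symm_coord]
        rw [hcoord]
        exact le_abs.mpr (Or.inl (by linarith))
  -- transfer to the Euclidean space
  have hmp : MeasurePreserving (⇑em.symm) volume volume :=
    (EuclideanSpace.volume_preserving_symm_measurableEquiv_toLp (Fin (m+1))).symm
  have hcoe : ∀ x : Fin (m+1) → ℝ, (em.symm x : E (m+1)) = ecl.symm x := fun x => rfl
  have := hmp.integral_comp em.symm.measurableEmbedding (divv u x₀ p)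
  rw [← this]
  rw [show (fun x => divv u x₀ p (em.symm x)) = fun x => divv u x₀ p (ecl.symm x) from
    funext fun x => by rw [hcoe]]
  exact hfull

/-! ### The two halves of the divergence and their integrability -/

variable (u x₀ p) in
def h1f (y : E n) : ℝ :=
  if dist y (0:E n) < 3 then u y * LF n p (Sq x₀ y) else 0

lemma h1f_zero {y : E n} (h : 1 < Sq x₀ y) : h1f u x₀ p y = 0 := by
  rw [h1f]
  split
  · rw [LF_outer n h.le]; ring
  · rfl

lemma cont_h1f (hu : ContDiffOn ℝ 2 u (Metric.ball (0:E n) 3))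
    (hx₀ : dist x₀ (0:E n) < 1) (hp : 0 < p) :
    Continuous (h1f u x₀ p) := by
  rw [continuous_iff_continuousAt]
  intro y
  rcases cover hx₀ y with hy | hy
  · have hy3 : y ∈ Metric.ball (0:E n) 3 := by rwa [Metric.mem_ball]
    have hu2 : ContDiffAt ℝ 2 u y := hu.contDiffAt (Metric.isOpen_ball.mem_nhds hy3)
    have hexpr : ContinuousAt (fun z => u z * LF n p (Sq x₀ z)) y :=
      hu2.continuousAt.mul
        ((contAt_LF n hp (Sq_nonneg x₀ y)).comp (cont_Sq x₀).continuousAt)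
    apply hexpr.congr
    filter_upwards [Metric.isOpen_ball.mem_nhds hy3] with z hz
    rw [h1f, if_pos (Metric.mem_ball.mp hz)]
  · apply continuousAt_const.congr
    filter_upwards [(open_outer x₀).mem_nhds hy] with z hz
    exact (h1f_zero hz).symm

lemma supp_in_ball {f : E n → ℝ} (hf : ∀ y : E n, 1 < Sq x₀ y → f y = 0) :
    HasCompactSupport f := by
  apply HasCompactSupport.intro (isCompact_closedBall x₀ 1)
  intro y hy
  apply hf
  rw [Metric.mem_closedBall, not_le] at hy
  rw [Sq_eq_dist]
  nlinarith [dist_nonneg (x := y) (y := x₀)]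

/-! ### The main quantitative estimate -/

lemma main_est {m k : ℕ} (hk : 1 ≤ k) (u : E (m+1) → ℝ)
    (hu : ContDiffOn ℝ 2 u (Metric.ball (0:E (m+1)) 3))
    (hupos : ∀ x ∈ Metric.ball (0:E (m+1)) 3, 0 < u x)
    (hgam : ∀ x ∈ Metric.ball (0:E (m+1)) 3, eigs (Amat u x) ∈ GammaK (m+1) k)
    {x₀ : E (m+1)} (hx₀ : x₀ ∈ Metric.ball (0:E (m+1)) 1)
    {r ε : ℝ} (hr : 0 < r) (hr2 : r ≤ 2⁻¹)
    (hur : ∀ y ∈ Metric.ball x₀ r, u x₀ - ε ≤ u y) (h0le : 0 ≤ u x₀ - ε) :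
    (u x₀ - ε) * (((m+1:ℕ):ℝ) * (2:ℝ) ^ (-((m+1:ℕ):ℝ)/2)
        * (volume (Metric.ball (0:E (m+1)) 1)).toReal)
      ≤ (max (Cmid (m+1)) 0 + 1) * ∫ y in Metric.ball (0:E (m+1)) 2, u y := by
  classical
  set p := r^2 with hpdef
  have hp : 0 < p := by positivity
  have hp4 : p ≤ 4⁻¹ := by rw [hpdef]; nlinarith
  have hx₀d : dist x₀ (0:E (m+1)) < 1 := Metric.mem_ball.mp hx₀
  set Cp : ℝ := max (Cmid (m+1)) 0 + 1 with hCpdef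
  have hCp : 0 < Cp := by
    rw [hCpdef]; have := le_max_right (Cmid (m+1)) 0; linarith
  set I : ℝ := ∫ y in Metric.ball (0:E (m+1)) 2, u y with hIdef
  -- integrability
  have int_h1 : Integrable (h1f u x₀ p) :=
    (cont_h1f hu hx₀d hp).integrable_of_hasCompactSupport
      (supp_in_ball (fun y h => h1f_zero h))
  have int_div : Integrable (divv u x₀ p) :=
    (cont_divv hu hx₀d hp).integrable_of_hasCompactSupport
      (supp_in_ball (fun y h => divv_zero h))
  have intU : IntegrableOn u (Metric.ball (0:E (m+1)) 2) := by
    have h1 : IntegrableOn u (Metric.closedBall (0:E (m+1)) 2) :=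
      ContinuousOn.integrableOn_compact (isCompact_closedBall _ _)
        (hu.continuousOn.mono (Metric.closedBall_subset_ball (by norm_num)))
    exact h1.mono_set Metric.ball_subset_closedBall
  set g : E (m+1) → ℝ := (Metric.ball (0:E (m+1)) 2).indicator u with hgdef
  have int_g : Integrable g := intU.integrable_indicator Metric.isOpen_ball.measurableSet
  have g_nonneg : ∀ y, 0 ≤ g y := by
    intro y
    apply Set.indicator_nonneg
    intro z hz
    exact (hupos z (Metric.ball_subset_ball (by norm_num) hz)).le
  -- `∫ h1f ≥ 0` from the divergence theorem and subharmonicity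
  have h2nonneg : ∀ y, 0 ≤ h1f u x₀ p y - divv u x₀ p y := by
    intro y
    by_cases h3 : dist y (0:E (m+1)) < 3
    · rw [h1f, divv, if_pos h3, if_pos h3]
      have heq : u y * LF (m+1) p (Sq x₀ y)
          - (u y * LF (m+1) p (Sq x₀ y) - phiF x₀ p y * lap u y)
          = phiF x₀ p y * lap u y := by ring
      rw [heq]
      have hy3 : y ∈ Metric.ball (0:E (m+1)) 3 := Metric.mem_ball.mpr h3
      apply mul_nonneg
      · rw [phiF]
        exact F0_nonneg (m+1) hp hp4 (Sq_nonneg x₀ y)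
      · rw [lap]
        exact lap_nonneg hk u (hu.contDiffAt (Metric.isOpen_ball.mem_nhds hy3))
          (hupos y hy3) (hgam y hy3)
    · rw [h1f, divv, if_neg h3, if_neg h3]; simp
  have hint : 0 ≤ ∫ y, h1f u x₀ p y := by
    have h20 : 0 ≤ ∫ y, (h1f u x₀ p y - divv u x₀ p y) :=
      integral_nonneg h2nonneg
    rwa [integral_sub int_h1 int_div, integral_divv_zero hu hx₀d hp, sub_zero] at h20
  -- split the integral
  set T : Set (E (m+1)) := {y | Sq x₀ y ≤ 4⁻¹} with hTdef
  have hTclosed : IsClosed T := isClosed_le (cont_Sq x₀) continuous_const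
  have hTmeas : MeasurableSet T := hTclosed.measurableSet
  have hsplit := MeasureTheory.integral_add_compl hTmeas int_h1
  -- facts about points of T
  have hT3 : ∀ y ∈ T, dist y (0:E (m+1)) < 3 := by
    intro y hy
    rw [hTdef, Set.mem_setOf_eq, Sq_eq_dist] at hy
    have hd1 : dist y x₀ ≤ 2⁻¹ := by nlinarith [dist_nonneg (x := y) (y := x₀)]
    have := dist_triangle y x₀ (0:E (m+1))
    linarith
  -- upper bound on `Tᶜ`
  have hupper : (∫ y in Tᶜ, h1f u x₀ p y) ≤ Cp * I := by
    have hpt : ∀ y ∈ Tᶜ, h1f u x₀ p y ≤ Cp * g y := by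
      intro y _
      by_cases h3 : dist y (0:E (m+1)) < 3
      · rw [h1f, if_pos h3]
        rcases le_or_gt (Sq x₀ y) 1 with hS | hS
        · have hy2 : y ∈ Metric.ball (0:E (m+1)) 2 := by
            rw [Metric.mem_ball]
            have hSd := Sq_eq_dist x₀ y
            have hd1 : dist y x₀ ≤ 1 := by nlinarith [dist_nonneg (x := y) (y := x₀)]
            have := dist_triangle y x₀ (0:E (m+1))
            linarith
          rw [hgdef, Set.indicator_of_mem hy2 u]
          have hLF : LF (m+1) p (Sq x₀ y) ≤ Cp := by
            have := LF_glob (m+1) hp hp4 (Sq_nonneg x₀ y)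
            rw [hCpdef]; linarith
          have hu0 : 0 ≤ u y := (hupos y (Metric.mem_ball.mpr h3)).le
          calc u y * LF (m+1) p (Sq x₀ y) ≤ u y * Cp :=
                mul_le_mul_of_nonneg_left hLF hu0
            _ = Cp * u y := mul_comm _ _
        · rw [LF_outer _ hS.le, mul_zero]
          exact mul_nonneg hCp.le (g_nonneg y)
      · rw [h1f, if_neg h3]
        exact mul_nonneg hCp.le (g_nonneg y)
    calc (∫ y in Tᶜ, h1f u x₀ p y) ≤ ∫ y in Tᶜ, Cp * g y := by
          apply MeasureTheory.setIntegral_mono_on int_h1.integrableOn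
            ((int_g.const_mul Cp).integrableOn) hTmeas.compl hpt
      _ ≤ ∫ y, Cp * g y := by
          apply MeasureTheory.setIntegral_le_integral (int_g.const_mul Cp)
          exact Filter.Eventually.of_forall (fun y => mul_nonneg hCp.le (g_nonneg y))
      _ = Cp * ∫ y, g y := MeasureTheory.integral_const_mul Cp g
      _ = Cp * I := by
          rw [hgdef, MeasureTheory.integral_indicator Metric.isOpen_ball.measurableSet]
  -- lower bound on `T`
  set nf : E (m+1) → ℝ := fun y => - h1f u x₀ p y with hnfdef
  have hnf_nonneg_T : ∀ y ∈ T, 0 ≤ nf y := by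
    intro y hy
    have h3 := hT3 y hy
    show 0 ≤ -h1f u x₀ p y
    rw [h1f, if_pos h3]
    rw [hTdef, Set.mem_setOf_eq] at hy
    have := LF_inner_nonpos (m+1) hp (Sq_nonneg x₀ y) hy
    have hu0 : 0 ≤ u y := (hupos y (Metric.mem_ball.mpr h3)).le
    nlinarith
  have hball_sub : Metric.ball x₀ r ⊆ T := by
    intro y hy
    rw [Metric.mem_ball] at hy
    rw [hTdef, Set.mem_setOf_eq, Sq_eq_dist]
    nlinarith [dist_nonneg (x := y) (y := x₀)]
  set mρ : ℝ := ((m+1:ℕ):ℝ) * (2:ℝ) ^ (-((m+1:ℕ):ℝ)/2) * p ^ (-((m+1:ℕ):ℝ)/2) with hmρdef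
  have hmρ0 : 0 ≤ mρ := by
    rw [hmρdef]
    have h1 : (0:ℝ) ≤ ((m+1:ℕ):ℝ) := Nat.cast_nonneg _
    have h2 : (0:ℝ) ≤ (2:ℝ) ^ (-((m+1:ℕ):ℝ)/2) := Real.rpow_nonneg (by norm_num) _
    have h3 : (0:ℝ) ≤ p ^ (-((m+1:ℕ):ℝ)/2) := Real.rpow_nonneg hp.le _
    positivity
  have hconst : ∀ y ∈ Metric.ball x₀ r, (u x₀ - ε) * mρ ≤ nf y := by
    intro y hy
    have hyT := hball_sub hy
    have h3 := hT3 y hyT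
    have hSlt : Sq x₀ y ≤ p := by
      rw [Metric.mem_ball] at hy
      rw [Sq_eq_dist]
      nlinarith [dist_nonneg (x := y) (y := x₀)]
    have hbnd := LF_inner_bound (m+1) hp hp4 (Sq_nonneg x₀ y) hSlt
    have hnf_eq : nf y = u y * (-(LF (m+1) p (Sq x₀ y))) := by
      show -h1f u x₀ p y = _
      rw [h1f, if_pos h3]; ring
    rw [hnf_eq]
    have hu0 : 0 ≤ u y := (hupos y (Metric.mem_ball.mpr h3)).le
    exact mul_le_mul (hur y hy) hbnd hmρ0 hu0
  have hvol : (volume (Metric.ball x₀ r)).toReal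
      = r^(m+1) * (volume (Metric.ball (0:E (m+1)) 1)).toReal := by
    rw [Measure.addHaar_ball volume x₀ hr.le, ENNReal.toReal_mul,
      ENNReal.toReal_ofReal (by positivity), finrank_euclideanSpace_fin]
  have hlow1 : (u x₀ - ε) * mρ * ((volume (Metric.ball x₀ r)).toReal)
      ≤ ∫ y in Metric.ball x₀ r, nf y := by
    apply MeasureTheory.setIntegral_ge_of_const_le_real Metric.isOpen_ball.measurableSet
      measure_ball_lt_top.ne hconst
    exact (int_h1.neg).integrableOn
  have hlow2 : (∫ y in Metric.ball x₀ r, nf y) ≤ ∫ y in T, nf y := by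
    apply MeasureTheory.setIntegral_mono_set (int_h1.neg).integrableOn
    · exact (MeasureTheory.ae_restrict_iff' hTmeas).mpr
        (Filter.Eventually.of_forall hnf_nonneg_T)
    · exact Filter.Eventually.of_forall hball_sub
  have hTneg : (∫ y in T, nf y) = - ∫ y in T, h1f u x₀ p y := by
    rw [hnfdef]; exact MeasureTheory.integral_neg _
  -- combine
  have hkey : (u x₀ - ε) * mρ * (r^(m+1)
      * (volume (Metric.ball (0:E (m+1)) 1)).toReal) ≤ Cp * I := by
    have hc1 : - (∫ y in T, h1f u x₀ p y) ≤ Cp * I := by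
      have := hsplit
      linarith [hupper, hint,
        show (∫ y in T, h1f u x₀ p y) + (∫ y in Tᶜ, h1f u x₀ p y) = ∫ y, h1f u x₀ p y
          from hsplit]
    calc (u x₀ - ε) * mρ * (r^(m+1) * (volume (Metric.ball (0:E (m+1)) 1)).toReal)
        = (u x₀ - ε) * mρ * ((volume (Metric.ball x₀ r)).toReal) := by rw [hvol]
      _ ≤ ∫ y in Metric.ball x₀ r, nf y := hlow1
      _ ≤ ∫ y in T, nf y := hlow2
      _ = - ∫ y in T, h1f u x₀ p y := hTneg
      _ ≤ Cp * I := hc1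
  -- simplify `mρ * r^(m+1)`
  have hpr : p ^ (-((m+1:ℕ):ℝ)/2) * r^(m+1) = 1 := by
    have h1 : p ^ (((m+1:ℕ):ℝ)/2) = r^(m+1) := by
      rw [hpdef, ← Real.rpow_two, ← Real.rpow_mul hr.le]
      rw [show (2:ℝ) * (((m+1:ℕ):ℝ)/2) = ((m+1:ℕ):ℝ) by ring]
      exact Real.rpow_natCast r (m+1)
    rw [← h1, ← Real.rpow_add hp]
    rw [show -((m+1:ℕ):ℝ)/2 + ((m+1:ℕ):ℝ)/2 = 0 by ring, Real.rpow_zero]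
  calc (u x₀ - ε) * (((m+1:ℕ):ℝ) * (2:ℝ) ^ (-((m+1:ℕ):ℝ)/2)
        * (volume (Metric.ball (0:E (m+1)) 1)).toReal)
      = (u x₀ - ε) * mρ * (r^(m+1)
        * (volume (Metric.ball (0:E (m+1)) 1)).toReal) := by
        rw [hmρdef]
        rw [show (u x₀ - ε) * (((m+1:ℕ):ℝ) * (2:ℝ) ^ (-((m+1:ℕ):ℝ)/2) * p ^ (-((m+1:ℕ):ℝ)/2))
            * (r^(m+1) * (volume (Metric.ball (0:E (m+1)) 1)).toReal)
          = (u x₀ - ε) * (((m+1:ℕ):ℝ) * (2:ℝ) ^ (-((m+1:ℕ):ℝ)/2)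
            * (volume (Metric.ball (0:E (m+1)) 1)).toReal)
            * (p ^ (-((m+1:ℕ):ℝ)/2) * r^(m+1)) by ring, hpr, mul_one]
    _ ≤ Cp * I := hkey

end SH18

open SH18

theorem stmt18 (n k : ℕ) (hk : 1 ≤ k) (hkn : 2 * k ≤ n) :
    ∃ C : ℝ, 0 < C ∧
      ∀ u : E n → ℝ, ContDiffOn ℝ 2 u (Metric.ball (0 : E n) 3) →
        (∀ x ∈ Metric.ball (0 : E n) 3, 0 < u x) →
        (∀ x ∈ Metric.ball (0 : E n) 3, eigs (Amat u x) ∈ GammaK n k) →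
        ∀ x ∈ Metric.ball (0 : E n) 1,
          u x ≤ C * ∫ y in Metric.ball (0 : E n) 2, u y := by
  obtain ⟨m, rfl⟩ : ∃ m, n = m + 1 := ⟨n - 1, by omega⟩
  set v : ℝ := (volume (Metric.ball (0:E (m+1)) 1)).toReal with hvdef
  have hv : 0 < v := by
    rw [hvdef]
    apply ENNReal.toReal_pos
    · exact (Metric.measure_ball_pos volume 0 one_pos).ne'
    · exact measure_ball_lt_top.ne
  set c₀ : ℝ := ((m+1:ℕ):ℝ) * (2:ℝ) ^ (-((m+1:ℕ):ℝ)/2) * v with hc₀def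
  have hc₀ : 0 < c₀ := by
    rw [hc₀def]
    have h1 : (0:ℝ) < ((m+1:ℕ):ℝ) := by positivity
    have h2 : (0:ℝ) < (2:ℝ) ^ (-((m+1:ℕ):ℝ)/2) := Real.rpow_pos_of_pos (by norm_num) _
    positivity
  set Cp : ℝ := max (Cmid (m+1)) 0 + 1 with hCpdef
  have hCp : 0 < Cp := by
    rw [hCpdef]; have := le_max_right (Cmid (m+1)) 0; linarith
  refine ⟨Cp / c₀, by positivity, ?_⟩
  intro u hu hupos hgam x₀ hx₀
  set I : ℝ := ∫ y in Metric.ball (0:E (m+1)) 2, u y with hIdef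
  have hI : 0 ≤ I := by
    rw [hIdef]
    apply MeasureTheory.setIntegral_nonneg Metric.isOpen_ball.measurableSet
    intro y hy
    exact (hupos y (Metric.ball_subset_ball (by norm_num) hy)).le
  by_contra hcon
  push_neg at hcon
  have hux : 0 < u x₀ := hupos x₀ (Metric.ball_subset_ball (by norm_num) hx₀)
  have hCI : 0 ≤ Cp / c₀ * I := by positivity
  set ε : ℝ := (u x₀ - Cp / c₀ * I) / 2 with hεdef
  have hε : 0 < ε := by rw [hεdef]; linarith
  -- find `r` from continuity
  have hcont : ContinuousAt u x₀ :=
    ((hu.contDiffAt (Metric.isOpen_ball.mem_nhds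
      (Metric.ball_subset_ball (by norm_num) hx₀))).continuousAt)
  obtain ⟨δ, hδ, hδprop⟩ := Metric.continuousAt_iff.mp hcont ε hε
  set r : ℝ := min (δ/2) 2⁻¹ with hrdef
  have hr : 0 < r := by rw [hrdef]; positivity
  have hr2 : r ≤ 2⁻¹ := min_le_right _ _
  have hur : ∀ y ∈ Metric.ball x₀ r, u x₀ - ε ≤ u y := by
    intro y hy
    rw [Metric.mem_ball] at hy
    have hyd : dist y x₀ < δ := by
      have : r ≤ δ/2 := min_le_left _ _
      linarith
    have := hδprop hyd
    rw [Real.dist_eq, abs_sub_lt_iff] at this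
    linarith [this.2]
  have h0le : 0 ≤ u x₀ - ε := by rw [hεdef]; linarith
  have := main_est hk u hu hupos hgam hx₀ hr hr2 hur h0le
  rw [← hc₀def, ← hCpdef, ← hIdef] at this
  have hfin : u x₀ - ε ≤ Cp / c₀ * I := by
    rw [div_mul_eq_mul_div, le_div_iff₀ hc₀]
    calc (u x₀ - ε) * c₀ ≤ Cp * I := this
      _ = Cp * I := rfl
  rw [hεdef] at hfin
  linarith
end
end
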